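/- arXiv:1510.03033 — 5 statements merged into one kernel-verified Lean document; each statement's English description precedes it below -/
import Mathlib

section
/- For every composition I = (i_1, …, i_r) of n, the polynomial q ↦ n! · g_I(q)/(1−q)^r is a polynomial in q with nonnegative integer coefficients. -/
/-- `G q [i_k, …, i_1] t` is the iterated integral
`G_{(i_1,…,i_k)}(t) = ∫_q^t s^{i_k−1} G_{(i_1,…,i_{k−1})}(s) ds`
(the list argument is the composition read in reverse). -/
noncomputable def G (q : ℝ) : List ℕ → ℝ → ℝ
  | [], _ => 1
  | i :: J, t => ∫ s in q..t, s ^ (i - 1) * G q J s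

/-- The composition polynomial `g_I(q) = G_{(i_1,…,i_r)}(1)`. -/
noncomputable def g (q : ℝ) (I : List ℕ) : ℝ := G q I.reverse 1

open Finset intervalIntegral Polynomial


noncomputable def Sf (k m : ℕ) (q t : ℝ) : ℝ :=
  ∑ b ∈ range (m + 1), ((k + b).choose b : ℝ) * q ^ (m - b) * t ^ b

lemma choose_fact1 (k m : ℕ) :
    (m + k + 1) * (m + k).choose k = (m + 1) * ((k + m + 1).choose (m + 1)) := by
  have h1 : (m + k).choose k = (m + k).choose m := by
    rw [← Nat.choose_symm (Nat.le_add_left k m)]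
    congr 1
    omega
  have h2 : Nat.succ (m + k) * (m + k).choose m = (m + k + 1).choose (m + 1) * (m + 1) :=
    Nat.add_one_mul_choose_eq (m + k) m
  rw [h1, show k + m + 1 = m + k + 1 by omega, show Nat.succ (m+k) = m + k + 1 from rfl] at *
  rw [h2, Nat.mul_comm]

lemma choose_fact2 (k m : ℕ) :
    (m + 1 + k + 1) * ((m + 1 + k).choose k) = (k + m + 2) * ((k + m + 1).choose (m + 1)) := by
  have h3 : (m + 1 + k).choose k = (k + m + 1).choose (m + 1) := by
    rw [show m + 1 + k = k + m + 1 by omega, ← Nat.choose_symm (show m + 1 ≤ k + m + 1 by omega)]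
    congr 1
    omega
  rw [h3, show m + 1 + k + 1 = k + m + 2 by omega]

lemma Sf_succ (k m : ℕ) (q t : ℝ) :
    Sf k (m + 1) q t = q * Sf k m q t + ((k + m + 1).choose (m + 1) : ℝ) * t ^ (m + 1) := by
  rw [Sf, sum_range_succ, Sf, mul_sum]
  congr 1
  · apply sum_congr rfl
    intro b hb
    have hbm : b ≤ m := by simpa using Nat.lt_succ_iff.mp (mem_range.mp hb)
    have : m + 1 - b = (m - b) + 1 := by omega
    rw [this, pow_succ]
    ring
  · simp [show k + (m + 1) = k + m + 1 by omega]

lemma Skey (k m : ℕ) (q t : ℝ) :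
    (k + 1 : ℝ) * Sf k m q t
      + (t - q) * ∑ b ∈ range (m + 1), (b : ℝ) * ((k + b).choose b : ℝ) * q ^ (m - b) * t ^ (b - 1)
    = ((m + k + 1) * (m + k).choose k : ℝ) * t ^ m := by
  induction m with
  | zero => simp [Sf]
  | succ m ih =>
    have hD : (∑ b ∈ range (m + 1 + 1), (b : ℝ) * ((k + b).choose b : ℝ) * q ^ (m + 1 - b) * t ^ (b - 1))
        = q * (∑ b ∈ range (m + 1), (b : ℝ) * ((k + b).choose b : ℝ) * q ^ (m - b) * t ^ (b - 1))
          + (m + 1 : ℝ) * ((k + m + 1).choose (m + 1) : ℝ) * t ^ m := by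
      rw [sum_range_succ, mul_sum]
      congr 1
      · apply sum_congr rfl
        intro b hb
        have hbm : b ≤ m := by simpa using Nat.lt_succ_iff.mp (mem_range.mp hb)
        have : m + 1 - b = (m - b) + 1 := by omega
        rw [this, pow_succ]
        ring
      · push_cast [show k + (m + 1) = k + m + 1 by omega, Nat.sub_self]
        ring
    rw [Sf_succ, hD]
    have h1 : ((m + k + 1) * (m + k).choose k : ℝ)
        = ((m : ℝ) + 1) * ((k + m + 1).choose (m + 1) : ℝ) := by
      exact_mod_cast congrArg (Nat.cast : ℕ → ℝ) (choose_fact1 k m)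
    have h2 : ((m : ℝ) + 1 + k + 1) * (((m + 1 + k).choose k : ℕ) : ℝ)
        = ((k : ℝ) + m + 2) * ((k + m + 1).choose (m + 1) : ℝ) := by
      exact_mod_cast congrArg (Nat.cast : ℕ → ℝ) (choose_fact2 k m)
    push_cast
    linear_combination q * ih + q * t ^ m * h1 - t ^ (m + 1) * h2

lemma hasDerivAt_F (k m : ℕ) (q x : ℝ) :
    HasDerivAt (fun t => (t - q) ^ (k + 1) * Sf k m q t)
      (((m + k + 1) * (m + k).choose k : ℝ) * (x ^ m * (x - q) ^ k)) x := by
  have h1 : HasDerivAt (fun t : ℝ => (t - q) ^ (k + 1)) ((k + 1 : ℝ) * (x - q) ^ k) x := by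
    simpa using ((hasDerivAt_id x).sub_const q).fun_pow (k + 1)
  have h2 : HasDerivAt (fun t => Sf k m q t)
      (∑ b ∈ range (m + 1), (b : ℝ) * ((k + b).choose b : ℝ) * q ^ (m - b) * x ^ (b - 1)) x := by
    unfold Sf
    apply HasDerivAt.fun_sum
    intro b _
    have := (hasDerivAt_pow b x).const_mul (((k + b).choose b : ℝ) * q ^ (m - b))
    exact this.congr_deriv (by ring)
  have := h1.mul h2
  refine this.congr_deriv ?_
  have hk := Skey k m q x
  unfold Sf at hk ⊢
  linear_combination ((x - q) ^ k) * hk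

lemma KI (m k : ℕ) (q t : ℝ) :
    ((m + k + 1) * (m + k).choose k : ℝ) * ∫ s in q..t, s ^ m * (s - q) ^ k
      = (t - q) ^ (k + 1) * Sf k m q t := by
  have h : ∫ s in q..t, ((m + k + 1) * (m + k).choose k : ℝ) * (s ^ m * (s - q) ^ k)
      = (t - q) ^ (k + 1) * Sf k m q t - (q - q) ^ (k + 1) * Sf k m q q := by
    apply intervalIntegral.integral_eq_sub_of_hasDerivAt
    · intro x _
      exact hasDerivAt_F k m q x
    · apply Continuous.intervalIntegrable
      fun_prop
  rw [intervalIntegral.integral_const_mul] at h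
  rw [h]
  simp

lemma repA (J : List ℕ) :
    ∃ (N : ℕ) (c : Fin N → ℝ) (a b : Fin N → ℕ),
      (∀ x, 0 ≤ c x) ∧
      ∀ q t : ℝ, G q J t = (t - q) ^ J.length * ∑ x, c x * q ^ a x * t ^ b x := by
  induction J with
  | nil =>
    exact ⟨1, fun _ => 1, fun _ => 0, fun _ => 0, fun _ => zero_le_one, by simp [G]⟩
  | cons i J ih =>
    obtain ⟨N, c, a, b, hc, hG⟩ := ih
    set k := J.length with hk
    set mm : Fin N → ℕ := fun x => (i - 1) + b x with hmm
    set M : Fin N → ℝ := fun x => (((mm x + k + 1) * (mm x + k).choose k : ℕ) : ℝ) with hM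
    have hMpos : ∀ x, 0 < M x := by
      intro x
      have h0 : 0 < (mm x + k + 1) * (mm x + k).choose k :=
        Nat.mul_pos (Nat.succ_pos _) (Nat.choose_pos (Nat.le_add_left _ _))
      simp only [hM]
      exact_mod_cast h0
    set σt := (x : Fin N) × Fin (mm x + 1) with hσ
    set e : σt ≃ Fin (Fintype.card σt) := Fintype.equivFin σt with he
    set FF : (x : Fin N) → ℕ → ℝ := fun x j =>
      c x * (M x)⁻¹ * ((k + j).choose j : ℝ) * 0 with hFF0
    clear hFF0 FF
    refine ⟨Fintype.card σt,
      fun y => c (e.symm y).1 * (M (e.symm y).1)⁻¹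
        * ((k + ((e.symm y).2 : ℕ)).choose ((e.symm y).2 : ℕ) : ℝ),
      fun y => a (e.symm y).1 + (mm (e.symm y).1 - ((e.symm y).2 : ℕ)),
      fun y => ((e.symm y).2 : ℕ), ?_, ?_⟩
    · intro y
      have := hc (e.symm y).1
      have := (hMpos (e.symm y).1).le
      positivity
    · intro q t
      have step1 : G q (i :: J) t
          = ∫ s in q..t, ∑ x, c x * q ^ a x * (s ^ mm x * (s - q) ^ k) := by
        show (∫ s in q..t, s ^ (i - 1) * G q J s) = _
        congr 1
        funext s
        rw [hG q s]
        simp only [Finset.mul_sum]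
        apply sum_congr rfl
        intro x _
        simp only [hmm, pow_add]
        ring
      rw [step1, intervalIntegral.integral_finset_sum]
      swap
      · intro x _
        apply Continuous.intervalIntegrable
        fun_prop
      have step2 : ∀ x, (∫ s in q..t, c x * q ^ a x * (s ^ mm x * (s - q) ^ k))
          = c x * q ^ a x * ((M x)⁻¹ * ((t - q) ^ (k + 1) * Sf k (mm x) q t)) := by
        intro x
        rw [intervalIntegral.integral_const_mul]
        congr 1
        rw [eq_inv_mul_iff_mul_eq₀ (ne_of_gt (hMpos x))]
        simp only [hM]
        push_cast
        exact KI (mm x) k q t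
      rw [Finset.sum_congr rfl fun x _ => step2 x]
      have expand : ∀ x, c x * q ^ a x * ((M x)⁻¹ * ((t - q) ^ (k + 1) * Sf k (mm x) q t))
          = (t - q) ^ (k + 1) * ∑ j ∈ range (mm x + 1),
              c x * (M x)⁻¹ * ((k + j).choose j : ℝ) * q ^ (a x + (mm x - j)) * t ^ j := by
        intro x
        simp only [Sf, Finset.mul_sum]
        apply sum_congr rfl
        intro j _
        rw [pow_add]
        ring
      rw [Finset.sum_congr rfl fun x _ => expand x, ← Finset.mul_sum]
      have lenc : (i :: J).length = k + 1 := by simp [hk]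
      rw [lenc]
      congr 1
      calc (∑ x : Fin N, ∑ j ∈ range (mm x + 1),
              c x * (M x)⁻¹ * ((k + j).choose j : ℝ) * q ^ (a x + (mm x - j)) * t ^ j)
          = ∑ z : σt, c z.1 * (M z.1)⁻¹ * ((k + (z.2 : ℕ)).choose (z.2 : ℕ) : ℝ)
              * q ^ (a z.1 + (mm z.1 - (z.2 : ℕ))) * t ^ (z.2 : ℕ) := by
            rw [← Finset.univ_sigma_univ, Finset.sum_sigma]
            exact sum_congr rfl fun x _ => (Fin.sum_univ_eq_sum_range _ _).symm
        _ = _ := (Equiv.sum_comp e.symm (fun z : σt => c z.1 * (M z.1)⁻¹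
              * ((k + (z.2 : ℕ)).choose (z.2 : ℕ) : ℝ)
              * q ^ (a z.1 + (mm z.1 - (z.2 : ℕ))) * t ^ (z.2 : ℕ))).symm

lemma int_sub_pow (q t : ℝ) (k : ℕ) :
    ∫ s in q..t, (s - q) ^ k = (t - q) ^ (k + 1) / (k + 1) := by
  have h := intervalIntegral.integral_comp_sub_right (fun u => u ^ k) q (a := q) (b := t)
  rw [h, sub_self, integral_pow]
  simp

lemma repB (J : List ℕ) (hJ : ∀ i ∈ J, 0 < i) :
    ∃ (N : ℕ) (c a m : Fin N → ℕ) (D : Fin N → Finset ℕ),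
      (∀ x, (D x).card = J.length) ∧
      (∀ x, ∀ d ∈ D x, 0 < d ∧ d ≤ m x) ∧
      (∀ x, m x ≤ J.sum) ∧
      ∀ q t : ℝ, G q J t
        = ∑ x, (c x : ℝ) / ((∏ d ∈ D x, d : ℕ) : ℝ) * q ^ a x * (t - q) ^ m x := by
  induction J with
  | nil =>
    exact ⟨1, fun _ => 1, fun _ => 0, fun _ => 0, fun _ => ∅,
      fun _ => rfl, fun _ d hd => absurd hd (Finset.notMem_empty d),
      fun _ => le_refl 0, by simp [G]⟩
  | cons i J ih =>
    obtain ⟨i', rfl⟩ : ∃ i', i = i' + 1 :=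
      ⟨i - 1, (Nat.succ_pred_eq_of_pos (hJ i List.mem_cons_self)).symm⟩
    obtain ⟨N, c, a, m, D, hcard, hD, hm, hG⟩ := ih fun j hj => hJ j (List.mem_cons_of_mem _ hj)
    set k := J.length with hk
    have hDpos : ∀ x, 0 < ∏ d ∈ D x, d :=
      fun x => Finset.prod_pos fun d hd => (hD x d hd).1
    set σt := (x : Fin N) × Fin (i' + 1) with hσ
    set e : σt ≃ Fin (Fintype.card σt) := Fintype.equivFin σt with he
    have hnm : ∀ (x : Fin N) (j : ℕ), m x + (i' - j) + 1 ∉ D x := by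
      intro x j hmem
      exact absurd ((hD x _ hmem).2) (by omega)
    refine ⟨Fintype.card σt,
      fun y => c (e.symm y).1 * i'.choose ((e.symm y).2 : ℕ),
      fun y => a (e.symm y).1 + ((e.symm y).2 : ℕ),
      fun y => m (e.symm y).1 + (i' - ((e.symm y).2 : ℕ)) + 1,
      fun y => insert (m (e.symm y).1 + (i' - ((e.symm y).2 : ℕ)) + 1) (D (e.symm y).1),
      ?_, ?_, ?_, ?_⟩
    · intro y
      simp only
      rw [Finset.card_insert_of_notMem (hnm _ _), hcard]
      simp [hk]
    · intro y d hd
      simp only at hd ⊢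
      rcases Finset.mem_insert.mp hd with h | h
      · omega
      · have := hD _ d h
        omega
    · intro y
      have := hm (e.symm y).1
      have h2 : i' - ((e.symm y).2 : ℕ) ≤ i' := Nat.sub_le _ _
      simp only [List.sum_cons]
      omega
    · intro q t
      have step1 : G q ((i' + 1) :: J) t
          = ∫ s in q..t, ∑ x, ∑ j ∈ range (i' + 1),
              (c x : ℝ) / ((∏ d ∈ D x, d : ℕ) : ℝ) * (i'.choose j : ℝ) * q ^ (a x + j)
                * (s - q) ^ (m x + (i' - j)) := by
        show (∫ s in q..t, s ^ (i' + 1 - 1) * G q J s) = _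
        congr 1
        funext s
        rw [hG q s, Nat.add_sub_cancel]
        have hbin : (s : ℝ) ^ i' = ∑ j ∈ range (i' + 1),
            q ^ j * (s - q) ^ (i' - j) * (i'.choose j : ℝ) := by
          have h := add_pow q (s - q) i'
          rw [show q + (s - q) = s by ring] at h
          exact h
        rw [Finset.mul_sum]
        apply sum_congr rfl
        intro x _
        rw [hbin, Finset.sum_mul]
        apply sum_congr rfl
        intro j _
        rw [pow_add, pow_add]
        ring
      rw [step1, intervalIntegral.integral_finset_sum]
      swap
      · intro x _
        apply Continuous.intervalIntegrable
        apply continuous_finset_sum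
        intro j _
        fun_prop
      have step2 : ∀ x, (∫ s in q..t, ∑ j ∈ range (i' + 1),
            (c x : ℝ) / ((∏ d ∈ D x, d : ℕ) : ℝ) * (i'.choose j : ℝ) * q ^ (a x + j)
              * (s - q) ^ (m x + (i' - j)))
          = ∑ j ∈ range (i' + 1),
            ((c x * i'.choose j : ℕ) : ℝ)
              / ((∏ d ∈ insert (m x + (i' - j) + 1) (D x), d : ℕ) : ℝ)
              * q ^ (a x + j) * (t - q) ^ (m x + (i' - j) + 1) := by
        intro x
        rw [intervalIntegral.integral_finset_sum]
        swap
        · intro j _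
          apply Continuous.intervalIntegrable
          fun_prop
        apply sum_congr rfl
        intro j _
        rw [intervalIntegral.integral_const_mul, int_sub_pow]
        rw [Finset.prod_insert (hnm x j)]
        have hd0 : ((∏ d ∈ D x, d : ℕ) : ℝ) ≠ 0 := by
          exact_mod_cast (hDpos x).ne'
        have hm0 : ((m x + (i' - j) + 1 : ℕ) : ℝ) ≠ 0 := by
          exact_mod_cast Nat.succ_ne_zero (m x + (i' - j))
        push_cast
        field_simp
      rw [Finset.sum_congr rfl fun x _ => step2 x]
      calc (∑ x : Fin N, ∑ j ∈ range (i' + 1),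
              ((c x * i'.choose j : ℕ) : ℝ)
                / ((∏ d ∈ insert (m x + (i' - j) + 1) (D x), d : ℕ) : ℝ)
                * q ^ (a x + j) * (t - q) ^ (m x + (i' - j) + 1))
          = ∑ z : σt, ((c z.1 * i'.choose (z.2 : ℕ) : ℕ) : ℝ)
                / ((∏ d ∈ insert (m z.1 + (i' - (z.2 : ℕ)) + 1) (D z.1), d : ℕ) : ℝ)
                * q ^ (a z.1 + (z.2 : ℕ)) * (t - q) ^ (m z.1 + (i' - (z.2 : ℕ)) + 1) := by
            rw [← Finset.univ_sigma_univ, Finset.sum_sigma]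
            exact sum_congr rfl fun x _ => (Fin.sum_univ_eq_sum_range _ _).symm
        _ = _ := (Equiv.sum_comp e.symm (fun z : σt =>
              ((c z.1 * i'.choose (z.2 : ℕ) : ℕ) : ℝ)
                / ((∏ d ∈ insert (m z.1 + (i' - (z.2 : ℕ)) + 1) (D z.1), d : ℕ) : ℝ)
                * q ^ (a z.1 + (z.2 : ℕ)) * (t - q) ^ (m z.1 + (i' - (z.2 : ℕ)) + 1))).symm

/-- for every composition `I` of `n`, `n! · g_I(q)/(1−q)^{ℓ(I)}` is a
polynomial in `q` with nonnegative integer coefficients. -/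
theorem reduced_composition_polynomial_nonneg_integer_coeffs
    (n : ℕ) (hn : 0 < n) (I : List ℕ) (hpos : ∀ i ∈ I, 0 < i) (hsum : I.sum = n) :
    ∃ p : Polynomial ℕ, ∀ q : ℝ,
      (Nat.factorial n : ℝ) * g q I =
        (1 - q) ^ I.length * Polynomial.eval q (p.map (Nat.castRingHom ℝ)) := by
  set r := I.length with hr
  have hJpos : ∀ i ∈ I.reverse, 0 < i := fun i hi => hpos i (List.mem_reverse.mp hi)
  have hlen : I.reverse.length = r := by rw [List.length_reverse]
  have hsumJ : I.reverse.sum = n := by rw [List.sum_reverse, hsum]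
  obtain ⟨NA, cA, aA, bA, hcA, hGA⟩ := repA I.reverse
  obtain ⟨NB, cB, aB, mB, DB, hcard, hDmem, hmB, hGB⟩ := repB I.reverse hJpos
  -- facts about B data
  have hdvd : ∀ x, (∏ d ∈ DB x, d) ∣ n.factorial := by
    intro x
    have hsub : DB x ⊆ Finset.Icc 1 n := by
      intro d hd
      have h1 := hDmem x d hd
      have h2 := hmB x
      rw [hsumJ] at h2
      exact Finset.mem_Icc.mpr ⟨h1.1, le_trans h1.2 h2⟩
    calc (∏ d ∈ DB x, d) ∣ ∏ d ∈ Finset.Icc 1 n, d :=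
          Finset.prod_dvd_prod_of_subset _ _ _ hsub
      _ = n.factorial := by
          rw [← Finset.Ico_add_one_right_eq_Icc]
          exact Finset.prod_Ico_id_eq_factorial n
  have hrle : ∀ x, r ≤ mB x := by
    intro x
    have hsub : DB x ⊆ Finset.Icc 1 (mB x) := by
      intro d hd
      exact Finset.mem_Icc.mpr ⟨(hDmem x d hd).1, (hDmem x d hd).2⟩
    have := Finset.card_le_card hsub
    rw [hcard, hlen] at this
    simpa using this
  have hprod0 : ∀ x, ((∏ d ∈ DB x, d : ℕ) : ℝ) ≠ 0 := by
    intro x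
    have : 0 < ∏ d ∈ DB x, d := Finset.prod_pos fun d hd => (hDmem x d hd).1
    exact_mod_cast this.ne'
  -- the two polynomials
  set W : Polynomial ℤ := ∑ x : Fin NB,
    Polynomial.C ((cB x * (n.factorial / ∏ d ∈ DB x, d) : ℕ) : ℤ)
      * X ^ (aB x) * (1 - X) ^ (mB x - r) with hW
  set V : Polynomial ℝ := ∑ x : Fin NA,
    Polynomial.C ((n.factorial : ℝ) * cA x) * X ^ (aA x) with hV
  have hB : ∀ q : ℝ, (n.factorial : ℝ) * g q I
      = (1 - q) ^ r * (W.map (Int.castRingHom ℝ)).eval q := by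
    intro q
    have hg : g q I = ∑ x, (cB x : ℝ) / ((∏ d ∈ DB x, d : ℕ) : ℝ) * q ^ aB x * (1 - q) ^ mB x :=
      hGB q 1
    rw [hg, Finset.mul_sum, hW, Polynomial.map_sum, Polynomial.eval_finset_sum, Finset.mul_sum]
    apply Finset.sum_congr rfl
    intro x _
    simp only [Polynomial.map_mul, Polynomial.map_pow, Polynomial.map_sub, Polynomial.map_one,
      Polynomial.map_C, Polynomial.map_X, Polynomial.eval_mul, Polynomial.eval_pow,
      Polynomial.eval_sub, Polynomial.eval_one, Polynomial.eval_X, Polynomial.eval_C]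
    have hc2 : ((Int.castRingHom ℝ) ((cB x * (n.factorial / ∏ d ∈ DB x, d) : ℕ) : ℤ))
        = (cB x : ℝ) * ((n.factorial : ℝ) / ((∏ d ∈ DB x, d : ℕ) : ℝ)) := by
      rw [map_natCast, Nat.cast_mul, Nat.cast_div (hdvd x) (hprod0 x)]
    rw [hc2]
    have hpow : (1 - q) ^ r * (1 - q) ^ (mB x - r) = (1 - q) ^ mB x := by
      rw [← pow_add]
      congr 1
      have := hrle x
      omega
    rw [← hpow]
    field_simp
  have hA : ∀ q : ℝ, (n.factorial : ℝ) * g q I = (1 - q) ^ r * V.eval q := by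
    intro q
    have hg : g q I = (1 - q) ^ r * ∑ x, cA x * q ^ aA x * (1 : ℝ) ^ bA x := by
      have := hGA q 1
      rw [hlen] at this
      exact this
    rw [hg, hV, Polynomial.eval_finset_sum]
    simp only [Polynomial.eval_mul, Polynomial.eval_pow, Polynomial.eval_C, Polynomial.eval_X,
      one_pow, mul_one]
    rw [mul_left_comm]
    congr 1
    rw [Finset.mul_sum]
    exact Finset.sum_congr rfl fun x _ => by ring
  have h1X : ((1 : Polynomial ℝ) - X) ≠ 0 := by
    intro h
    have := congrArg (Polynomial.eval 0) h
    simp at this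
  have hWV : W.map (Int.castRingHom ℝ) = V := by
    have h : ((1 : Polynomial ℝ) - X) ^ r * W.map (Int.castRingHom ℝ)
        = ((1 : Polynomial ℝ) - X) ^ r * V := by
      apply Polynomial.funext
      intro q
      rw [Polynomial.eval_mul, Polynomial.eval_mul, Polynomial.eval_pow]
      simp only [Polynomial.eval_sub, Polynomial.eval_one, Polynomial.eval_X]
      rw [← hB q, ← hA q]
    exact mul_left_cancel₀ (pow_ne_zero _ h1X) h
  have hWcoeff : ∀ j, 0 ≤ W.coeff j := by
    intro j
    have hcast : ((W.coeff j : ℤ) : ℝ) = V.coeff j := by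
      rw [← hWV, Polynomial.coeff_map]
      rfl
    have hVc : 0 ≤ V.coeff j := by
      rw [hV, Polynomial.finset_sum_coeff]
      apply Finset.sum_nonneg
      intro x _
      rw [Polynomial.coeff_C_mul, Polynomial.coeff_X_pow]
      have := hcA x
      positivity
    rw [← hcast] at hVc
    exact_mod_cast hVc
  refine ⟨∑ j ∈ W.support, Polynomial.C (W.coeff j).toNat * X ^ j, fun q => ?_⟩
  have hpmap : (∑ j ∈ W.support, Polynomial.C (W.coeff j).toNat * X ^ j).map (Nat.castRingHom ℝ)
      = W.map (Int.castRingHom ℝ) := by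
    ext j
    rw [Polynomial.coeff_map, Polynomial.coeff_map]
    have hc : (∑ i ∈ W.support, Polynomial.C (W.coeff i).toNat * X ^ i).coeff j
        = (W.coeff j).toNat := by
      rw [Polynomial.finset_sum_coeff]
      simp only [Polynomial.coeff_C_mul, Polynomial.coeff_X_pow]
      rw [Finset.sum_eq_single j]
      · simp
      · intro i _ hij
        simp [Ne.symm hij]
      · intro hj
        rw [Polynomial.notMem_support_iff.mp hj]
        simp
    rw [hc]
    have htn := Int.toNat_of_nonneg (hWcoeff j)
    conv_rhs => rw [← htn]
    simp only [eq_natCast, eq_intCast, Int.cast_natCast]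
  rw [hpmap]
  exact hB q
end

section
/- For every composition I = (i_1, …, i_r) of n, the polynomial g_I(q) is divisible by (1−q)^r in the polynomial ring ℚ[q]; that is, there is a polynomial f_I(q) ∈ ℚ[q] with g_I(q) = (1−q)^r f_I(q) for all q. -/
open Polynomial

/-- Formal antiderivative over a `ℚ`-algebra. -/
noncomputable def antider {A : Type*} [CommRing A] [Algebra ℚ A] (p : A[X]) : A[X] :=
  p.sum fun n a => C (((n : ℚ) + 1)⁻¹ • a) * X ^ (n + 1)

lemma derivative_antider {A : Type*} [CommRing A] [Algebra ℚ A] (p : A[X]) :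
    derivative (antider p) = p := by
  conv_rhs => rw [← sum_C_mul_X_pow_eq p]
  unfold antider
  rw [Polynomial.sum_def, Polynomial.sum_def, map_sum]
  refine Finset.sum_congr rfl ?_
  intro n _
  rw [derivative_C_mul_X_pow, Nat.add_sub_cancel]
  congr 1
  rw [Algebra.smul_def]
  have h : ((n + 1 : ℕ) : A) = algebraMap ℚ A ((n : ℚ) + 1) := by push_cast; simp
  have h2 : algebraMap ℚ A (((n : ℚ) + 1))⁻¹ * algebraMap ℚ A ((n : ℚ) + 1) = 1 := by
    rw [← map_mul, inv_mul_cancel₀ (by positivity), map_one]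
  rw [h, mul_right_comm, h2, one_mul]

/-- If `p(c) = 0` and `(X - c)^k ∣ p'`, then `(X - c)^(k+1) ∣ p` (over a `ℚ`-algebra). -/
lemma pow_sub_dvd_of_eval_eq_zero {A : Type*} [CommRing A] [Algebra ℚ A] (c : A) (k : ℕ)
    (p : A[X]) (h0 : p.eval c = 0) (hd : (X - C c) ^ k ∣ derivative p) :
    (X - C c) ^ (k + 1) ∣ p := by
  set u := p.comp (X + C c) with hu
  have hu0 : u.coeff 0 = 0 := by
    rw [coeff_zero_eq_eval_zero, hu, eval_comp]
    simpa using h0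
  have hdu : X ^ k ∣ derivative u := by
    obtain ⟨h, hh⟩ := hd
    refine ⟨h.comp (X + C c), ?_⟩
    rw [hu, derivative_comp, hh, mul_comp, pow_comp, sub_comp, X_comp, C_comp]
    simp [add_sub_cancel_right]
  have hucoeff : X ^ (k + 1) ∣ u := by
    rw [X_pow_dvd_iff]
    intro d hdk
    rcases Nat.eq_zero_or_pos d with rfl | hdpos
    · exact hu0
    · obtain ⟨e, rfl⟩ : ∃ e, d = e + 1 := ⟨d - 1, (Nat.succ_pred_eq_of_pos hdpos).symm⟩
      have h1 : (derivative u).coeff e = 0 :=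
        (X_pow_dvd_iff.mp hdu) e (by omega)
      rw [coeff_derivative] at h1
      have h3 : ((e : A) + 1) * algebraMap ℚ A (((e : ℚ) + 1))⁻¹ = 1 := by
        have h : ((e : A) + 1) = algebraMap ℚ A ((e : ℚ) + 1) := by push_cast; simp
        rw [h, ← map_mul, mul_inv_cancel₀ (by positivity), map_one]
      calc u.coeff (e + 1)
          = u.coeff (e + 1) * (((e : A) + 1) * algebraMap ℚ A (((e : ℚ) + 1))⁻¹) := by
            rw [h3, mul_one]
        _ = 0 := by rw [← mul_assoc, h1, zero_mul]
  obtain ⟨h, hh⟩ := hucoeff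
  refine ⟨h.comp (X - C c), ?_⟩
  have hp : p = u.comp (X - C c) := by
    rw [hu, comp_assoc]
    simp [sub_add_cancel]
  rw [hp, hh, mul_comp, pow_comp, X_comp]

/-- The two-variable polynomial representing `G`. The inner variable is `q`, the outer is `t`. -/
noncomputable def P : List ℕ → Polynomial (Polynomial ℚ)
  | [] => 1
  | i :: J => antider (X ^ (i - 1) * P J)
      - C ((antider (X ^ (i - 1) * P J)).eval (Polynomial.X))

lemma P_dvd (J : List ℕ) : (X - C (Polynomial.X : Polynomial ℚ)) ^ J.length ∣ P J := by
  induction J with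
  | nil => simp [P]
  | cons i J ih =>
    show (X - C (Polynomial.X : Polynomial ℚ)) ^ (J.length + 1) ∣ P (i :: J)
    apply pow_sub_dvd_of_eval_eq_zero
    · simp [P]
    · rw [P, derivative_sub, derivative_C, sub_zero, derivative_antider]
      exact ih.mul_left _

/-- Evaluation homomorphism `ℚ[q] → ℝ` at `q`. -/
noncomputable def φ (q : ℝ) : Polynomial ℚ →+* ℝ :=
  (Polynomial.evalRingHom q).comp (Polynomial.mapRingHom (Rat.castHom ℝ))

lemma φ_X (q : ℝ) : φ q Polynomial.X = q := by simp [φ]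

lemma G_eq (q : ℝ) (J : List ℕ) (t : ℝ) : G q J t = ((P J).map (φ q)).eval t := by
  induction J generalizing t with
  | nil => simp [G, P]
  | cons i J ih =>
    have key : ∀ s : ℝ, s ^ (i - 1) * G q J s = (((X ^ (i - 1) * P J).map (φ q))).eval s := by
      intro s
      rw [ih]
      simp [Polynomial.map_mul, Polynomial.map_pow]
    have hA : ∀ s : ℝ, HasDerivAt (fun x => ((antider (X ^ (i - 1) * P J)).map (φ q)).eval x)
        (s ^ (i - 1) * G q J s) s := by
      intro s
      have h := Polynomial.hasDerivAt ((antider (X ^ (i - 1) * P J)).map (φ q)) s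
      rwa [derivative_map, derivative_antider, ← key s] at h
    have hcont : Continuous fun s : ℝ => s ^ (i - 1) * G q J s := by
      have : (fun s : ℝ => s ^ (i - 1) * G q J s)
          = fun s => (((X ^ (i - 1) * P J).map (φ q))).eval s := funext key
      rw [this]
      exact Polynomial.continuous _
    have hint : G q (i :: J) t
        = ((antider (X ^ (i - 1) * P J)).map (φ q)).eval t
          - ((antider (X ^ (i - 1) * P J)).map (φ q)).eval q := by
      show (∫ s in q..t, s ^ (i - 1) * G q J s) = _
      exact intervalIntegral.integral_eq_sub_of_hasDerivAt (fun s _ => hA s)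
        (hcont.intervalIntegrable q t)
    rw [hint, P, Polynomial.map_sub, eval_sub, map_C, eval_C]
    congr 1
    have : (antider (X ^ (i - 1) * P J)).eval (Polynomial.X : Polynomial ℚ)
        = eval₂ (RingHom.id _) (Polynomial.X : Polynomial ℚ) (antider (X ^ (i - 1) * P J)) := by
      rw [eval]
    rw [this, hom_eval₂, φ_X, eval_map]
    rfl


/-- `g_I(q)` is divisible by `(1−q)^r` in `ℚ[q]`: there is `f_I ∈ ℚ[q]`
with `g_I(q) = (1−q)^r f_I(q)` for all `q`. -/
theorem composition_polynomial_divisible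
    (n : ℕ) (hn : 0 < n) (I : List ℕ) (hpos : ∀ i ∈ I, 0 < i) (hsum : I.sum = n) :
    ∃ f : Polynomial ℚ, ∀ q : ℝ,
      g q I = (1 - q) ^ I.length * Polynomial.eval q (f.map (Rat.castHom ℝ)) := by
  obtain ⟨h, hh⟩ := P_dvd I.reverse
  refine ⟨h.eval (1 : Polynomial ℚ), ?_⟩
  intro q
  rw [g, G_eq, hh, Polynomial.map_mul, eval_mul, Polynomial.map_pow, Polynomial.map_sub,
    map_X, map_C]
  congr 1
  · simp [φ]
  · have : h.eval (1 : Polynomial ℚ) = eval₂ (RingHom.id _) (1 : Polynomial ℚ) h := by rw [eval]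
    have h2 : φ q (h.eval (1 : Polynomial ℚ)) = ((h.map (φ q))).eval 1 := by
      rw [this, hom_eval₂, map_one, eval_map]
      rfl
    rw [← h2]
    simp [φ]
end

section
/- For a composition I of n, let Q_I(q) = Σ_π q^{sinv(π)}, the sum over all permutitions π of size n with c(π) = I. Then for every composition I = (i_1, …, i_r) of n with r ≥ 2, q · i_1 · Q_I(q) + Q_{(i_1+i_2, i_3, …, i_r)}(q) = i_1 · Q_I(q) + (n!/(n−i_1)!) · q^{i_1} · Q_{(i_2, …, i_r)}(q), where Q_{(i_2,…,i_r)} is the corresponding sum over permutitions of size n − i_1. -/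
/-- A permutition (set of lists) of size `n`, represented canonically: the list of
blocks, each block a nonempty list of distinct letters, the letters partitioning
`{1, …, n}`, and the blocks ordered by increasing value of their last letters. -/
def IsPermutition (n : ℕ) (L : List (List ℕ)) : Prop :=
  (∀ B ∈ L, B ≠ []) ∧ L.flatten.Nodup ∧
    (∀ x, x ∈ L.flatten ↔ 1 ≤ x ∧ x ≤ n) ∧
    List.Chain' (· < ·) (L.map fun B => B.getLastD 0)

/-- `c(π)`: the composition of `n` formed by the block sizes, blocks being ordered by
increasing last letter. -/
def shape (L : List (List ℕ)) : List ℕ := L.map List.length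

/-- `sinv(π)`: the number of letters strictly greater than the last letter of their block. -/
def sinv (L : List (List ℕ)) : ℕ :=
  (L.map fun B => B.countP fun x => decide (B.getLastD 0 < x)).sum

/-- `Q_I(q) = Σ_{c(π)=I} q^{sinv(π)}`, summed over permutitions of size `n`. -/
noncomputable def Q (q : ℝ) (n : ℕ) (I : List ℕ) : ℝ :=
  ∑ᶠ L ∈ {L : List (List ℕ) | IsPermutition n L ∧ shape L = I}, q ^ sinv L

open List Finset

namespace PP

/-- the list `[1, …, n]` -/
def pR (n : ℕ) : List ℕ := List.range' 1 n

theorem mem_pR {n x : ℕ} : x ∈ pR n ↔ 1 ≤ x ∧ x ≤ n := by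
  simp [pR, List.mem_range'_1]; omega

theorem nodup_pR (n : ℕ) : (pR n).Nodup := List.nodup_range' 1

theorem pairwise_pR (n : ℕ) : (pR n).Pairwise (· < ·) := List.pairwise_lt_range' ..

theorem length_pR (n : ℕ) : (pR n).length = n := List.length_range' ..

theorem perm_of_mem_iff {l₁ l₂ : List ℕ} (h₁ : l₁.Nodup) (h₂ : l₂.Nodup)
    (h : ∀ x, x ∈ l₁ ↔ x ∈ l₂) : l₁ ~ l₂ := (List.perm_ext_iff_of_nodup h₁ h₂).2 h

def chop : List ℕ → List ℕ → List (List ℕ)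
  | [], _ => []
  | k :: K, l => l.take k :: chop K (l.drop k)

theorem chop_shape : ∀ (L : List (List ℕ)), chop (shape L) L.flatten = L
  | [] => rfl
  | B :: L => by
      simp only [shape, List.map_cons, List.flatten_cons, chop,
        List.take_left, List.drop_left]
      exact congrArg _ (chop_shape L)

theorem flatten_perm {n : ℕ} {L : List (List ℕ)} (h : IsPermutition n L) :
    L.flatten ~ pR n :=
  perm_of_mem_iff h.2.1 (nodup_pR n) (fun x => by rw [h.2.2.1 x, mem_pR])

theorem flatten_length {n : ℕ} {L : List (List ℕ)} (h : IsPermutition n L) :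
    L.flatten.length = n := by
  rw [(flatten_perm h).length_eq, length_pR]

theorem finite_perm (n : ℕ) (I : List ℕ) :
    {L | IsPermutition n L ∧ shape L = I}.Finite := by
  apply Set.Finite.subset (Set.Finite.image (chop I) (List.finite_toSet (pR n).permutations))
  rintro L ⟨hL, rfl⟩
  exact ⟨L.flatten, by simpa [List.mem_permutations] using flatten_perm hL, chop_shape L⟩

/-- a "partial permutition" : blocks with distinct letters from `{1,…,n}`, increasing
last letters, shape `K`, and `m` letters in total. -/
def IsTail (n m : ℕ) (K : List ℕ) (M : List (List ℕ)) : Prop :=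
  (∀ B ∈ M, B ≠ []) ∧ M.flatten.Nodup ∧ (∀ x ∈ M.flatten, x ∈ pR n) ∧
    List.Chain' (· < ·) (M.map fun B => B.getLastD 0) ∧ shape M = K ∧
    M.flatten.length = m

theorem finite_tail (n m : ℕ) (K : List ℕ) : {M | IsTail n m K M}.Finite := by
  have h1 : {l : List ℕ | l <+~ pR n}.Finite := by
    have : {l : List ℕ | l <+~ pR n} ⊆
        ⋃ t ∈ {t | t ∈ (pR n).sublists}, {l | l ~ t} := by
      rintro l ⟨l', hp, hs⟩
      exact Set.mem_biUnion (by simpa using hs) hp.symm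
    apply Set.Finite.subset _ this
    exact Set.Finite.biUnion (List.finite_toSet _)
      (fun t _ => by
        have : {l : List ℕ | l ~ t} = {l | l ∈ t.permutations} := by
          ext l; simp [List.mem_permutations]
        rw [this]; exact List.finite_toSet _)
  apply Set.Finite.subset (Set.Finite.image (chop K) h1)
  rintro M hM
  refine ⟨M.flatten, hM.2.1.subperm (fun x hx => hM.2.2.1 x hx), ?_⟩
  rw [← hM.2.2.2.2.1, chop_shape M]

noncomputable def PF (n : ℕ) (I : List ℕ) : Finset (List (List ℕ)) :=
  (finite_perm n I).toFinset

noncomputable def TF (n m : ℕ) (K : List ℕ) : Finset (List (List ℕ)) :=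
  (finite_tail n m K).toFinset

theorem mem_PF {n : ℕ} {I : List ℕ} {L : List (List ℕ)} :
    L ∈ PF n I ↔ IsPermutition n L ∧ shape L = I := Set.Finite.mem_toFinset _

theorem mem_TF {n m : ℕ} {K : List ℕ} {M : List (List ℕ)} :
    M ∈ TF n m K ↔ IsTail n m K M := Set.Finite.mem_toFinset _

theorem Q_eq (q : ℝ) (n : ℕ) (I : List ℕ) : Q q n I = ∑ L ∈ PF n I, q ^ sinv L := by
  rw [Q, show {L | IsPermutition n L ∧ shape L = I} = ↑(PF n I) from
    (Set.Finite.coe_toFinset _).symm, finsum_mem_coe_finset]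

end PP

namespace PP

/-- complement of the letters of `M` in `{1,…,n}`, as a sorted list -/
def co (n : ℕ) (M : List (List ℕ)) : List ℕ :=
  (pR n).filter (fun x => decide (x ∉ M.flatten))

/-- last letter of the first block -/
def blast (M : List (List ℕ)) : ℕ := M.headI.getLastD 0

/-- number of elements of `T` greater than `ℓ` -/
def rnk (T : List ℕ) (ℓ : ℕ) : ℕ := T.countP (fun x => decide (ℓ < x))

theorem mem_co {n : ℕ} {M : List (List ℕ)} {x : ℕ} :
    x ∈ co n M ↔ x ∈ pR n ∧ x ∉ M.flatten := by simp [co]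

theorem nodup_co (n : ℕ) (M : List (List ℕ)) : (co n M).Nodup :=
  (nodup_pR n).filter _

theorem pairwise_co (n : ℕ) (M : List (List ℕ)) : (co n M).Pairwise (· < ·) :=
  (pairwise_pR n).sublist List.filter_sublist

theorem length_co {n m : ℕ} {K : List ℕ} {M : List (List ℕ)} (h : IsTail n m K M) :
    (co n M).length = n - m := by
  have h1 : ((pR n).filter (fun x => decide (x ∈ M.flatten))) ~ M.flatten := by
    refine perm_of_mem_iff ((nodup_pR n).filter _) h.2.1 (fun x => ?_)
    simp only [List.mem_filter, decide_eq_true_eq]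
    exact ⟨fun hx => hx.2, fun hx => ⟨h.2.2.1 x hx, hx⟩⟩
  have h2 := List.length_eq_countP_add_countP (fun x => decide (x ∈ M.flatten)) (l := pR n)
  rw [List.countP_eq_length_filter, List.countP_eq_length_filter] at h2
  have h3 : ((pR n).filter (fun x => ¬decide (x ∈ M.flatten))) = co n M := by
    simp [co]
  rw [h3, h1.length_eq, h.2.2.2.2.2, length_pR] at h2
  omega

theorem rnk_eq_card {T : List ℕ} (hT : T.Nodup) (ℓ : ℕ) :
    rnk T ℓ = (T.toFinset.filter (fun x => ℓ < x)).card := by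
  rw [rnk, List.countP_eq_length_filter, ← List.toFinset_card_of_nodup (hT.filter _),
    List.toFinset_filter]
  simp

/-- each element of a finite set of naturals, mapped to its "rank from the top". -/
theorem sum_rank (t : Finset ℕ) (q : ℝ) :
    ∑ ℓ ∈ t, q ^ (t.filter (fun x => ℓ < x)).card = ∑ j ∈ Finset.range t.card, q ^ j := by
  set r : ℕ → ℕ := fun ℓ => (t.filter (fun x => ℓ < x)).card with hr
  have anti : ∀ a ∈ t, ∀ b ∈ t, a < b → r b < r a := by
    intro a ha b hb hab
    apply Finset.card_lt_card
    constructor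
    · exact Finset.filter_subset_filter _ (fun x hx => hx) |>.trans
        (by intro x hx; simp only [Finset.mem_filter] at hx ⊢; exact ⟨hx.1, hab.trans hx.2⟩)
    · intro hsub
      have : b ∈ t.filter (fun x => b < x) := hsub (by simp [hab, hb])
      simp at this
  have inj : ∀ a ∈ t, ∀ b ∈ t, r a = r b → a = b := by
    intro a ha b hb hab
    rcases lt_trichotomy a b with h | h | h
    · exact absurd hab (anti a ha b hb h).ne'
    · exact h
    · exact absurd hab (anti b hb a ha h).ne
  have himg : t.image r = Finset.range t.card := by
    apply Finset.eq_of_subset_of_card_le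
    · intro x hx
      simp only [Finset.mem_image] at hx
      obtain ⟨ℓ, hℓ, rfl⟩ := hx
      rw [Finset.mem_range]
      calc r ℓ ≤ (t.erase ℓ).card := Finset.card_le_card (by
            intro x hx
            simp only [Finset.mem_filter] at hx
            exact Finset.mem_erase.2 ⟨hx.2.ne', hx.1⟩)
        _ < t.card := Finset.card_erase_lt_of_mem hℓ
    · rw [Finset.card_range, Finset.card_image_of_injOn (fun a ha b hb => inj a ha b hb)]
  rw [← himg, Finset.sum_image inj]

/-- the key scalar identity, for a single tail. -/
theorem scalar_key {T : List ℕ} {b i₁ : ℕ} (hi : 0 < i₁) (hT : T.Nodup) (hb : b ∉ T)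
    (hlen : T.length = i₁) (q : ℝ) :
    q * i₁ * ((i₁ - 1).factorial *
        (∑ ℓ ∈ T.toFinset.filter (fun ℓ => ℓ < b), q ^ rnk T ℓ)) +
      i₁.factorial * q ^ rnk T b =
    (i₁ : ℝ) * ((i₁ - 1).factorial *
        (∑ ℓ ∈ T.toFinset.filter (fun ℓ => ℓ < b), q ^ rnk T ℓ)) +
      i₁.factorial * q ^ i₁ := by
  classical
  set t := T.toFinset with ht
  have hbt : b ∉ t := by simp [ht, List.mem_toFinset, hb]
  have hcard : t.card = i₁ := by rw [ht, List.toFinset_card_of_nodup hT, hlen]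
  set t' := t.filter (fun ℓ => ℓ < b) with ht'
  set A := (t.filter (fun x => b < x)).card with hA
  have hpart : t'.card + A = i₁ := by
    have hunion : t' ∪ t.filter (fun x => b < x) = t := by
      ext x
      simp only [ht', Finset.mem_union, Finset.mem_filter]
      constructor
      · rintro (⟨hx, _⟩ | ⟨hx, _⟩) <;> exact hx
      · intro hx
        have hxb : x ≠ b := fun h => hbt (h ▸ hx)
        rcases lt_or_gt_of_ne hxb with h | h
        · exact Or.inl ⟨hx, h⟩
        · exact Or.inr ⟨hx, h⟩
    have hdisj : Disjoint t' (t.filter (fun x => b < x)) := by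
      rw [Finset.disjoint_left]
      intro x hx hx'
      have h1 : x < b := (Finset.mem_filter.1 hx).2
      have h2 : b < x := (Finset.mem_filter.1 hx').2
      omega
    rw [← hcard, ← hunion, Finset.card_union_of_disjoint hdisj]
  have hrnk : ∀ ℓ ∈ t', rnk T ℓ = A + (t'.filter (fun x => ℓ < x)).card := by
    intro ℓ hℓ
    have hℓb : ℓ < b := (Finset.mem_filter.1 hℓ).2
    rw [rnk_eq_card hT]
    have hsplit : t.filter (fun x => ℓ < x) =
        (t'.filter (fun x => ℓ < x)) ∪ (t.filter (fun x => b < x)) := by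
      ext x
      simp only [ht', Finset.mem_union, Finset.mem_filter]
      constructor
      · rintro ⟨hx, hℓx⟩
        have hxb : x ≠ b := fun h => hbt (h ▸ hx)
        rcases lt_or_gt_of_ne hxb with h | h
        · exact Or.inl ⟨⟨hx, h⟩, hℓx⟩
        · exact Or.inr ⟨hx, h⟩
      · rintro (⟨⟨hx, _⟩, hℓx⟩ | ⟨hx, hbx⟩)
        · exact ⟨hx, hℓx⟩
        · exact ⟨hx, hℓb.trans hbx⟩
    rw [hsplit, Finset.card_union_of_disjoint, add_comm]
    rw [Finset.disjoint_left]
    rintro x hx hx'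
    have h1 : x < b := (Finset.mem_filter.1 (Finset.mem_filter.1 hx).1).2
    have h2 : b < x := (Finset.mem_filter.1 hx').2
    omega
  have hsum : ∑ ℓ ∈ t', q ^ rnk T ℓ =
      q ^ A * ∑ j ∈ Finset.range t'.card, q ^ j := by
    calc ∑ ℓ ∈ t', q ^ rnk T ℓ
        = ∑ ℓ ∈ t', q ^ A * q ^ (t'.filter (fun x => ℓ < x)).card := by
          refine Finset.sum_congr rfl (fun ℓ hℓ => ?_)
          rw [hrnk ℓ hℓ, pow_add]
      _ = q ^ A * ∑ ℓ ∈ t', q ^ (t'.filter (fun x => ℓ < x)).card := by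
          rw [Finset.mul_sum]
      _ = q ^ A * ∑ j ∈ Finset.range t'.card, q ^ j := by rw [sum_rank]
  have hAb : rnk T b = A := by rw [rnk_eq_card hT, hA]
  rw [hAb, hsum]
  set G := ∑ j ∈ Finset.range t'.card, q ^ j with hG
  have hg : G * (q - 1) = q ^ t'.card - 1 := geom_sum_mul q t'.card
  have hfac : (i₁ : ℝ) * ((i₁ - 1).factorial : ℝ) = (i₁.factorial : ℝ) := by
    rw [← Nat.cast_mul, Nat.mul_factorial_pred hi.ne']
  have hpow : q ^ A * q ^ t'.card = q ^ i₁ := by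
    rw [← pow_add]
    congr 1
    omega
  linear_combination ((q - 1) * q ^ A * G) * hfac + (i₁.factorial : ℝ) * q ^ A * hg +
    (i₁.factorial : ℝ) * hpow

end PP
namespace PP

theorem getLastD_mem {l : List ℕ} (h : l ≠ []) (d : ℕ) : l.getLastD d ∈ l := by
  rw [List.getLastD_eq_getLast? , List.getLast?_eq_getLast h]
  exact List.getLast_mem h

theorem getLastD_append {u v : List ℕ} (h : v ≠ []) (d : ℕ) :
    (u ++ v).getLastD d = v.getLastD d := by
  rw [List.getLastD_eq_getLast?, List.getLastD_eq_getLast?, List.getLast?_append,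
    List.getLast?_eq_getLast h]
  rfl

/-- In the `|T|!` orderings of a duplicate-free list `T`, every letter appears
`(|T|-1)!` times as the last letter. -/
theorem sum_perms_last (T : List ℕ) (hT : T.Nodup) (hT0 : T ≠ []) (g : ℕ → ℝ) :
    ∑ u ∈ T.permutations.toFinset, g (u.getLastD 0) =
      (T.length - 1).factorial • ∑ ℓ ∈ T.toFinset, g ℓ := by
  classical
  have hmaps : ∀ u ∈ T.permutations.toFinset, u.getLastD 0 ∈ T.toFinset := by
    intro u hu
    rw [List.mem_toFinset] at hu ⊢
    have hp : u ~ T := List.mem_permutations.1 hu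
    have hu0 : u ≠ [] := by rintro rfl; exact hT0 hp.symm.eq_nil
    exact hp.subset (getLastD_mem hu0 0)
  rw [← Finset.sum_fiberwise_of_maps_to hmaps, Finset.smul_sum]
  refine Finset.sum_congr rfl (fun ℓ hℓ => ?_)
  rw [List.mem_toFinset] at hℓ
  have hcard : (T.permutations.toFinset.filter (fun u => u.getLastD 0 = ℓ)).card =
      (T.length - 1).factorial := by
    have h1 : (T.erase ℓ).length = T.length - 1 := List.length_erase_of_mem hℓ
    rw [← h1, ← List.length_permutations, ← List.toFinset_card_of_nodup
      (List.nodup_permutations _ (hT.erase ℓ))]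
    apply Finset.card_bij' (i := fun u _ => u.dropLast) (j := fun v _ => v ++ [ℓ])
    · intro u hu
      simp only [Finset.mem_filter, List.mem_toFinset, List.mem_permutations] at hu ⊢
      obtain ⟨hp, hlast⟩ := hu
      have hu0 : u ≠ [] := by rintro rfl; exact hT0 hp.symm.eq_nil
      have hdrop : u.dropLast ++ [ℓ] = u := by
        conv_rhs => rw [← List.dropLast_append_getLast hu0]
        congr 1
        rw [← hlast, List.getLastD_eq_getLast?, List.getLast?_eq_getLast hu0]
        rfl
      have hnd : u.Nodup := hp.nodup_iff.2 hT
      have hℓnot : ℓ ∉ u.dropLast := by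
        intro hmem
        have := hnd
        rw [← hdrop] at this
        exact (List.disjoint_of_nodup_append this) hmem (by simp)
      have : u.erase ℓ = u.dropLast := by
        conv_lhs => rw [← hdrop]
        rw [List.erase_append_right _ hℓnot]
        simp
      rw [← this]
      exact hp.erase ℓ
    · intro v hv
      simp only [Finset.mem_filter, List.mem_toFinset, List.mem_permutations] at hv ⊢
      constructor
      · calc v ++ [ℓ] ~ ℓ :: v := List.perm_append_singleton ℓ v
          _ ~ ℓ :: T.erase ℓ := (List.Perm.cons ℓ hv)
          _ ~ T := (List.perm_cons_erase hℓ).symm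
      · rw [List.getLastD_concat]
    · intro u hu
      simp only [Finset.mem_filter, List.mem_toFinset, List.mem_permutations] at hu
      obtain ⟨hp, hlast⟩ := hu
      have hu0 : u ≠ [] := by rintro rfl; exact hT0 hp.symm.eq_nil
      conv_rhs => rw [← List.dropLast_append_getLast hu0]
      congr 1
      rw [← hlast, List.getLastD_eq_getLast?, List.getLast?_eq_getLast hu0]
      rfl
    · intro v _
      exact List.dropLast_concat
  have hcong : ∀ u ∈ T.permutations.toFinset.filter (fun u => u.getLastD 0 = ℓ),
      g (u.getLastD 0) = g ℓ := fun u hu => by rw [(Finset.mem_filter.1 hu).2]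
  rw [Finset.sum_congr rfl hcong, Finset.sum_const, hcard]
end PP
namespace PP

theorem sinv_cons (B : List ℕ) (M : List (List ℕ)) :
    sinv (B :: M) = B.countP (fun x => decide (B.getLastD 0 < x)) + sinv M := by
  simp [sinv]

theorem perm_co {n m : ℕ} {K : List ℕ} {σ : List (List ℕ)} (hσ : IsTail n m K σ)
    {u : List ℕ} (hnd : (u ++ σ.flatten).Nodup)
    (hcov : ∀ x, x ∈ u ++ σ.flatten ↔ x ∈ pR n) : u ~ co n σ := by
  refine perm_of_mem_iff hnd.of_append_left (nodup_co n σ) (fun x => ?_)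
  rw [mem_co]
  constructor
  · intro hx
    exact ⟨(hcov x).1 (List.mem_append_left _ hx),
      fun hfl => (List.disjoint_of_nodup_append hnd) hx hfl⟩
  · rintro ⟨hpr, hnfl⟩
    rcases List.mem_append.1 ((hcov x).2 hpr) with h | h
    · exact h
    · exact absurd h hnfl

theorem of_perm_co {n m : ℕ} {K : List ℕ} {σ : List (List ℕ)} (hσ : IsTail n m K σ)
    {u : List ℕ} (hu : u ~ co n σ) :
    (u ++ σ.flatten).Nodup ∧ (∀ x, x ∈ u ++ σ.flatten ↔ x ∈ pR n) := by
  have hmemu : ∀ x, x ∈ u ↔ x ∈ co n σ := fun x => hu.mem_iff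
  constructor
  · refine List.Nodup.append (hu.nodup_iff.2 (nodup_co n σ)) hσ.2.1 ?_
    intro x hx hfl
    exact (mem_co.1 ((hmemu x).1 hx)).2 hfl
  · intro x
    rw [List.mem_append]
    constructor
    · rintro (h | h)
      · exact (mem_co.1 ((hmemu x).1 h)).1
      · exact hσ.2.2.1 x h
    · intro hpr
      by_cases hfl : x ∈ σ.flatten
      · exact Or.inr hfl
      · exact Or.inl ((hmemu x).2 (mem_co.2 ⟨hpr, hfl⟩))

theorem tail_destruct {n m i₂ : ℕ} {J : List ℕ} {σ : List (List ℕ)}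
    (hσ : IsTail n m (i₂ :: J) σ) :
    ∃ v M, σ = v :: M ∧ v.length = i₂ ∧ shape M = J ∧ v ≠ [] := by
  rcases σ with _ | ⟨v, M⟩
  · exact absurd hσ.2.2.2.2.1 (by simp [shape])
  · have h := hσ.2.2.2.2.1
    simp only [shape, List.map_cons, List.cons.injEq] at h
    exact ⟨v, M, rfl, h.1, h.2, hσ.1 v (by simp)⟩

/-- Splitting off the whole first block:  `Q_{(i₁,K)}` as a sum over tails. -/
theorem split_lemma (q : ℝ) (n m i₁ i₂ : ℕ) (hn : i₁ + m = n) (hi : 0 < i₁)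
    (J : List ℕ) :
    ∑ L ∈ PF n (i₁ :: i₂ :: J), q ^ sinv L =
      ∑ σ ∈ TF n m (i₂ :: J), ((i₁ - 1).factorial : ℝ) *
        (∑ ℓ ∈ (co n σ).toFinset.filter (fun ℓ => ℓ < blast σ), q ^ rnk (co n σ) ℓ) *
          q ^ sinv σ := by
  classical
  have key : ∑ L ∈ PF n (i₁ :: i₂ :: J), q ^ sinv L =
      ∑ p ∈ (TF n m (i₂ :: J)).sigma (fun σ =>
        (co n σ).permutations.toFinset.filter (fun u => u.getLastD 0 < blast σ)),
        q ^ rnk (co n p.1) (p.2.getLastD 0) * q ^ sinv p.1 := by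
    refine Finset.sum_nbij' (fun L => ⟨L.tail, L.headI⟩)
      (fun p => p.2 :: p.1) ?_ ?_ ?_ ?_ ?_
    · -- forward membership
      intro L hL
      rw [mem_PF] at hL
      obtain ⟨hP, hsh⟩ := hL
      rcases L with _ | ⟨B, M⟩
      · exact absurd hsh (by simp [shape])
      simp only [shape, List.map_cons, List.cons.injEq] at hsh
      have hfl : (B :: M).flatten = B ++ M.flatten := by simp
      have hndL := hP.2.1
      have hcovL := hP.2.2.1
      rw [hfl] at hndL
      have hcov : ∀ x, x ∈ B ++ M.flatten ↔ x ∈ pR n := by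
        intro x
        rw [← hfl, hP.2.2.1 x, mem_pR]
      have hlen : (B ++ M.flatten).length = n := by
        rw [(perm_of_mem_iff hndL (nodup_pR n) hcov).length_eq, length_pR]
      have hM : IsTail n m (i₂ :: J) M := by
        refine ⟨fun C hC => hP.1 C (by simp [hC]), hndL.of_append_right,
          fun x hx => (hcov x).1 (List.mem_append_right _ hx), ?_, hsh.2, ?_⟩
        · have := hP.2.2.2
          simp only [List.map_cons] at this
          exact this.tail
        · rw [List.length_append] at hlen
          omega
      have hBco : B ~ co n M := perm_co hM hndL hcov
      obtain ⟨v, M', rfl, hv1, hv2, hv3⟩ := tail_destruct hM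
      have hchain := hP.2.2.2
      simp only [List.map_cons] at hchain
      have hlt : B.getLastD 0 < blast (v :: M') := (List.isChain_cons_cons.1 hchain).1
      simp only [List.tail_cons, List.headI_cons]
      rw [Finset.mem_sigma]
      refine ⟨mem_TF.2 hM, ?_⟩
      rw [Finset.mem_filter, List.mem_toFinset, List.mem_permutations]
      exact ⟨hBco, hlt⟩
    · -- backward membership
      rintro ⟨σ, u⟩ hp
      rw [Finset.mem_sigma] at hp
      obtain ⟨hσ, hu⟩ := hp
      rw [mem_TF] at hσ
      rw [Finset.mem_filter, List.mem_toFinset, List.mem_permutations] at hu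
      obtain ⟨huco, hult⟩ := hu
      dsimp only at hσ huco hult ⊢
      obtain ⟨hnd, hcov⟩ := of_perm_co hσ huco
      have hulen : u.length = i₁ := by
        rw [huco.length_eq, length_co hσ]; omega
      obtain ⟨v, M', hσeq, hv1, hv2, hv3⟩ := tail_destruct hσ
      rw [mem_PF]
      constructor
      · refine ⟨?_, by simpa using hnd, ?_, ?_⟩
        · rintro C hC
          rcases List.mem_cons.1 hC with rfl | h
          · intro h0; rw [h0] at hulen; simp at hulen; omega
          · exact hσ.1 C h
        · intro x
          have : x ∈ (u :: σ).flatten ↔ x ∈ u ++ σ.flatten := by simp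
          rw [this, hcov x, mem_pR]
        · simp only [List.map_cons]
          rw [hσeq] at hult ⊢
          have hchain := hσ.2.2.2.1
          rw [hσeq] at hchain
          simp only [List.map_cons] at hchain ⊢
          exact List.isChain_cons_cons.2 ⟨hult, hchain⟩
      · simp only [shape, List.map_cons, List.cons.injEq]
        exact ⟨hulen, by simpa [shape] using hσ.2.2.2.2.1⟩
    · -- left inverse
      intro L hL
      rw [mem_PF] at hL
      rcases L with _ | ⟨B, M⟩
      · exact absurd hL.2 (by simp [shape])
      · rfl
    · -- right inverse
      rintro ⟨σ, u⟩ _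
      rfl
    · -- weights
      intro L hL
      rw [mem_PF] at hL
      obtain ⟨hP, hsh⟩ := hL
      rcases L with _ | ⟨B, M⟩
      · exact absurd hsh (by simp [shape])
      simp only [shape, List.map_cons, List.cons.injEq] at hsh
      have hfl : (B :: M).flatten = B ++ M.flatten := by simp
      have hndL := hP.2.1
      rw [hfl] at hndL
      have hcov : ∀ x, x ∈ B ++ M.flatten ↔ x ∈ pR n := by
        intro x
        rw [← hfl, hP.2.2.1 x, mem_pR]
      have hM : IsTail n m (i₂ :: J) M := by
        refine ⟨fun C hC => hP.1 C (by simp [hC]), hndL.of_append_right,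
          fun x hx => (hcov x).1 (List.mem_append_right _ hx), ?_, hsh.2, ?_⟩
        · have := hP.2.2.2
          simp only [List.map_cons] at this
          exact this.tail
        · have hlen : (B ++ M.flatten).length = n := by
            rw [(perm_of_mem_iff hndL (nodup_pR n) hcov).length_eq, length_pR]
          rw [List.length_append] at hlen
          omega
      have hBco : B ~ co n M := perm_co hM hndL hcov
      dsimp only
      rw [sinv_cons, pow_add]
      congr 2
      exact hBco.countP_eq _
  rw [key, Finset.sum_sigma]
  refine Finset.sum_congr rfl (fun σ hσF => ?_)
  rw [mem_TF] at hσF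
  have hco0 : co n σ ≠ [] := by
    intro h
    have := length_co hσF
    rw [h] at this
    simp at this
    omega
  have hcolen : (co n σ).length = i₁ := by rw [length_co hσF]; omega
  dsimp only
  rw [← Finset.sum_mul]
  congr 1
  rw [Finset.sum_filter]
  have : ∀ u ∈ (co n σ).permutations.toFinset,
      (if u.getLastD 0 < blast σ then q ^ rnk (co n σ) (u.getLastD 0) else 0) =
      (fun ℓ => if ℓ < blast σ then q ^ rnk (co n σ) ℓ else 0) (u.getLastD 0) := by
    intro u _; rfl
  rw [Finset.sum_congr rfl this, sum_perms_last (co n σ) (nodup_co n σ) hco0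
    (fun ℓ => if ℓ < blast σ then q ^ rnk (co n σ) ℓ else 0), hcolen,
    ← Finset.sum_filter, nsmul_eq_mul]

end PP
namespace PP

/-- Splitting the first `i₁` letters off the first block:  `Q_{(i₁+i₂,J)}` as a sum
over tails. -/
theorem merge_lemma (q : ℝ) (n m i₁ i₂ : ℕ) (hn : i₁ + m = n) (hi : 0 < i₁)
    (hi₂ : 0 < i₂) (J : List ℕ) :
    ∑ L ∈ PF n ((i₁ + i₂) :: J), q ^ sinv L =
      ∑ σ ∈ TF n m (i₂ :: J),
        (i₁.factorial : ℝ) * q ^ rnk (co n σ) (blast σ) * q ^ sinv σ := by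
  classical
  have key : ∑ L ∈ PF n ((i₁ + i₂) :: J), q ^ sinv L =
      ∑ p ∈ (TF n m (i₂ :: J)).sigma (fun σ => (co n σ).permutations.toFinset),
        q ^ rnk (co n p.1) (blast p.1) * q ^ sinv p.1 := by
    refine Finset.sum_nbij' (fun L => ⟨L.headI.drop i₁ :: L.tail, L.headI.take i₁⟩)
      (fun p => (p.2 ++ p.1.headI) :: p.1.tail) ?_ ?_ ?_ ?_ ?_
    · -- forward membership
      intro L hL
      rw [mem_PF] at hL
      obtain ⟨hP, hsh⟩ := hL
      rcases L with _ | ⟨B, M⟩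
      · exact absurd hsh (by simp [shape])
      simp only [shape, List.map_cons, List.cons.injEq] at hsh
      simp only [List.headI_cons, List.tail_cons]
      have hv : (B.drop i₁).length = i₂ := by rw [List.length_drop, hsh.1]; omega
      have hv0 : B.drop i₁ ≠ [] := by
        intro h; rw [h] at hv; simp at hv; omega
      have huv : B.take i₁ ++ B.drop i₁ = B := List.take_append_drop i₁ B
      have hfl : (B :: M).flatten = B.take i₁ ++ (B.drop i₁ :: M).flatten := by
        rw [List.flatten_cons, List.flatten_cons, ← List.append_assoc, huv]
      have hndL := hP.2.1
      rw [hfl] at hndL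
      have hcov : ∀ x, x ∈ B.take i₁ ++ (B.drop i₁ :: M).flatten ↔ x ∈ pR n := by
        intro x
        rw [← hfl, hP.2.2.1 x, mem_pR]
      have hlen : (B.take i₁ ++ (B.drop i₁ :: M).flatten).length = n := by
        rw [(perm_of_mem_iff hndL (nodup_pR n) hcov).length_eq, length_pR]
      have hlast : (B.drop i₁).getLastD 0 = B.getLastD 0 := by
        conv_rhs => rw [← huv]
        rw [getLastD_append hv0]
      have hM : IsTail n m (i₂ :: J) (B.drop i₁ :: M) := by
        refine ⟨?_, hndL.of_append_right,
          fun x hx => (hcov x).1 (List.mem_append_right _ hx), ?_, ?_, ?_⟩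
        · rintro C hC
          rcases List.mem_cons.1 hC with rfl | h
          · exact hv0
          · exact hP.1 C (by simp [h])
        · have hchain := hP.2.2.2
          simp only [List.map_cons] at hchain ⊢
          rw [hlast]
          exact hchain
        · simp only [shape, List.map_cons, List.cons.injEq]
          exact ⟨hv, hsh.2⟩
        · have : (B.take i₁).length = i₁ := by rw [List.length_take, hsh.1]; omega
          rw [List.length_append, this] at hlen
          omega
      have hM' := hM
      rw [Finset.mem_sigma]
      refine ⟨mem_TF.2 hM, ?_⟩
      rw [List.mem_toFinset, List.mem_permutations]
      exact perm_co hM hndL hcov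
    · -- backward membership
      rintro ⟨σ, u⟩ hp
      rw [Finset.mem_sigma] at hp
      obtain ⟨hσ, hu⟩ := hp
      rw [mem_TF] at hσ
      rw [List.mem_toFinset, List.mem_permutations] at hu
      dsimp only at hσ hu ⊢
      obtain ⟨hnd, hcov⟩ := of_perm_co hσ hu
      have hulen : u.length = i₁ := by
        rw [hu.length_eq, length_co hσ]; omega
      obtain ⟨v, M, hσeq, hv1, hv2, hv3⟩ := tail_destruct hσ
      subst hσeq
      simp only [List.headI_cons, List.tail_cons]
      rw [mem_PF]
      constructor
      · refine ⟨?_, ?_, ?_, ?_⟩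
        · rintro C hC
          rcases List.mem_cons.1 hC with rfl | h
          · simp [hv3]
          · exact hσ.1 C (by simp [h])
        · have : ((u ++ v) :: M).flatten = u ++ (v :: M).flatten := by simp
          rw [this]
          exact hnd
        · intro x
          have : ((u ++ v) :: M).flatten = u ++ (v :: M).flatten := by simp
          rw [this, hcov x, mem_pR]
        · have hchain := hσ.2.2.2.1
          simp only [List.map_cons] at hchain ⊢
          rw [getLastD_append hv3]
          exact hchain
      · simp only [shape, List.map_cons, List.cons.injEq]
        rw [List.length_append, hulen, hv1]
        refine ⟨rfl, ?_⟩
        have hs := hσ.2.2.2.2.1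
        simp only [shape, List.map_cons, List.cons.injEq] at hs
        exact hs.2
    · -- left inverse
      intro L hL
      rw [mem_PF] at hL
      rcases L with _ | ⟨B, M⟩
      · exact absurd hL.2 (by simp [shape])
      simp only [List.headI_cons, List.tail_cons, List.take_append_drop]
    · -- right inverse
      rintro ⟨σ, u⟩ hp
      rw [Finset.mem_sigma] at hp
      obtain ⟨hσ, hu⟩ := hp
      rw [mem_TF] at hσ
      rw [List.mem_toFinset, List.mem_permutations] at hu
      obtain ⟨v, M, hσeq, hv1, hv2, hv3⟩ := tail_destruct hσ
      subst hσeq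
      have hulen : u.length = i₁ := by
        rw [hu.length_eq, length_co hσ]; omega
      simp only [List.headI_cons, List.tail_cons]
      have h1 : (u ++ v).drop i₁ = v := by rw [← hulen, List.drop_left]
      have h2 : (u ++ v).take i₁ = u := by rw [← hulen, List.take_left]
      rw [h1, h2]
    · -- weights
      intro L hL
      rw [mem_PF] at hL
      obtain ⟨hP, hsh⟩ := hL
      rcases L with _ | ⟨B, M⟩
      · exact absurd hsh (by simp [shape])
      simp only [shape, List.map_cons, List.cons.injEq] at hsh
      simp only [List.headI_cons, List.tail_cons]
      have hv : (B.drop i₁).length = i₂ := by rw [List.length_drop, hsh.1]; omega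
      have hv0 : B.drop i₁ ≠ [] := by
        intro h; rw [h] at hv; simp at hv; omega
      have huv : B.take i₁ ++ B.drop i₁ = B := List.take_append_drop i₁ B
      have hfl : (B :: M).flatten = B.take i₁ ++ (B.drop i₁ :: M).flatten := by
        rw [List.flatten_cons, List.flatten_cons, ← List.append_assoc, huv]
      have hndL := hP.2.1
      rw [hfl] at hndL
      have hcov : ∀ x, x ∈ B.take i₁ ++ (B.drop i₁ :: M).flatten ↔ x ∈ pR n := by
        intro x
        rw [← hfl, hP.2.2.1 x, mem_pR]
      have hlast : (B.drop i₁).getLastD 0 = B.getLastD 0 := by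
        conv_rhs => rw [← huv]
        rw [getLastD_append hv0]
      have hM : IsTail n m (i₂ :: J) (B.drop i₁ :: M) := by
        refine ⟨?_, hndL.of_append_right,
          fun x hx => (hcov x).1 (List.mem_append_right _ hx), ?_, ?_, ?_⟩
        · rintro C hC
          rcases List.mem_cons.1 hC with rfl | h
          · exact hv0
          · exact hP.1 C (by simp [h])
        · have hchain := hP.2.2.2
          simp only [List.map_cons] at hchain ⊢
          rw [hlast]
          exact hchain
        · simp only [shape, List.map_cons, List.cons.injEq]
          exact ⟨hv, hsh.2⟩
        · have hlen : (B.take i₁ ++ (B.drop i₁ :: M).flatten).length = n := by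
            rw [(perm_of_mem_iff hndL (nodup_pR n) hcov).length_eq, length_pR]
          have : (B.take i₁).length = i₁ := by rw [List.length_take, hsh.1]; omega
          rw [List.length_append, this] at hlen
          omega
      have huco : B.take i₁ ~ co n (B.drop i₁ :: M) := perm_co hM hndL hcov
      have hcnt : B.countP (fun x => decide (B.getLastD 0 < x)) =
          (B.take i₁).countP (fun x => decide (B.getLastD 0 < x)) +
          (B.drop i₁).countP (fun x => decide (B.getLastD 0 < x)) := by
        rw [← List.countP_append, huv]
      have hblast : blast (B.drop i₁ :: M) = B.getLastD 0 := by
        rw [blast, List.headI_cons, hlast]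
      have hrnk : (B.take i₁).countP (fun x => decide (B.getLastD 0 < x)) =
          rnk (co n (B.drop i₁ :: M)) (B.getLastD 0) := huco.countP_eq _
      rw [sinv_cons, sinv_cons, hblast, hcnt, hlast, ← hrnk, ← pow_add]
      congr 1
      omega
  rw [key, Finset.sum_sigma]
  refine Finset.sum_congr rfl (fun σ hσF => ?_)
  rw [mem_TF] at hσF
  have hcolen : (co n σ).length = i₁ := by rw [length_co hσF]; omega
  dsimp only
  rw [Finset.sum_const, List.toFinset_card_of_nodup
    (List.nodup_permutations _ (nodup_co n σ)), List.length_permutations, hcolen,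
    nsmul_eq_mul, mul_assoc]

end PP
namespace PP

theorem getLastD_map (g : ℕ → ℕ) {B : List ℕ} (h : B ≠ []) :
    (B.map g).getLastD 0 = g (B.getLastD 0) := by
  rw [List.getLastD_eq_getLast?, List.getLastD_eq_getLast?, List.getLast?_map,
    List.getLast?_eq_getLast h]
  rfl

theorem lastD_mem_flatten {σ : List (List ℕ)} (h0 : ∀ B ∈ σ, B ≠ []) {c : ℕ}
    (hc : c ∈ σ.map (fun B => B.getLastD 0)) : c ∈ σ.flatten := by
  obtain ⟨B, hB, rfl⟩ := List.mem_map.1 hc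
  exact List.mem_flatten.2 ⟨B, hB, getLastD_mem (h0 B hB) 0⟩

theorem sinv_map {g : ℕ → ℕ} {σ : List (List ℕ)} (h0 : ∀ B ∈ σ, B ≠ [])
    (hg : ∀ x ∈ σ.flatten, ∀ y ∈ σ.flatten, (x < y ↔ g x < g y)) :
    sinv (σ.map (List.map g)) = sinv σ := by
  rw [sinv, sinv, List.map_map]
  congr 1
  refine List.map_congr_left (fun B hB => ?_)
  have hB0 := h0 B hB
  simp only [Function.comp]
  rw [getLastD_map g hB0, List.countP_map]
  refine List.countP_congr (fun a ha => ?_)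
  simp only [Function.comp, decide_eq_true_eq]
  exact (hg (B.getLastD 0) (List.mem_flatten.2 ⟨B, hB, getLastD_mem hB0 0⟩)
    a (List.mem_flatten.2 ⟨B, hB, ha⟩)).symm

theorem chain_map {g : ℕ → ℕ} {σ : List (List ℕ)} (h0 : ∀ B ∈ σ, B ≠ [])
    (hg : ∀ x ∈ σ.flatten, ∀ y ∈ σ.flatten, (x < y ↔ g x < g y))
    (hc : List.Chain' (· < ·) (σ.map fun B => B.getLastD 0)) :
    List.Chain' (· < ·) ((σ.map (List.map g)).map fun B => B.getLastD 0) := by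
  have hmm : (σ.map (List.map g)).map (fun B => B.getLastD 0) =
      (σ.map fun B => B.getLastD 0).map g := by
    rw [List.map_map, List.map_map]
    exact List.map_congr_left (fun B hB => by
      simp only [Function.comp]
      exact getLastD_map g (h0 B hB))
  rw [hmm] at *
  unfold List.Chain' at *
  rw [List.isChain_iff_pairwise] at *
  rw [List.pairwise_map]
  refine List.Pairwise.imp_of_mem (fun {a b} ha hb hab => ?_) hc
  exact (hg a (lastD_mem_flatten h0 ha) b (lastD_mem_flatten h0 hb)).1 hab

theorem indexOf_lt_iff {s : List ℕ} (hs : s.Pairwise (· < ·)) {x y : ℕ}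
    (hx : x ∈ s) (hy : y ∈ s) : List.idxOf x s < List.idxOf y s ↔ x < y := by
  have hnd : s.Nodup := hs.imp (fun h => ne_of_lt h)
  have hix := List.idxOf_lt_length_iff.2 hx
  have hiy := List.idxOf_lt_length_iff.2 hy
  constructor
  · intro h
    have := List.pairwise_iff_getElem.1 hs _ _ hix hiy h
    rwa [List.getElem_idxOf hix, List.getElem_idxOf hiy] at this
  · intro hxy
    by_contra h
    push_neg at h
    rcases eq_or_lt_of_le h with heq | hlt
    · exact absurd ((List.idxOf_inj hy).1 heq) (ne_of_gt hxy)
    · have := List.pairwise_iff_getElem.1 hs _ _ hiy hix hlt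
      rw [List.getElem_idxOf hiy, List.getElem_idxOf hix] at this
      omega

def sL (n : ℕ) (σ : List (List ℕ)) : List ℕ :=
  (pR n).filter (fun x => decide (x ∈ σ.flatten))

def relabel (n : ℕ) (σ : List (List ℕ)) : List (List ℕ) :=
  σ.map (List.map (fun x => List.idxOf x (sL n σ) + 1))

def unlabel (s : List ℕ) (σ : List (List ℕ)) : List (List ℕ) :=
  σ.map (List.map (fun y => s.getD (y - 1) 0))

end PP
namespace PP

theorem sL_facts {n m : ℕ} {K : List ℕ} {σ : List (List ℕ)} (hσ : IsTail n m K σ) :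
    (sL n σ).Pairwise (· < ·) ∧ (sL n σ) ~ σ.flatten ∧ (sL n σ).length = m ∧
      (sL n σ) <+ pR n := by
  have hsub : sL n σ <+ pR n := List.filter_sublist
  have hpw : (sL n σ).Pairwise (· < ·) := (pairwise_pR n).sublist hsub
  have hnd : (sL n σ).Nodup := (nodup_pR n).sublist hsub
  have hperm : sL n σ ~ σ.flatten := by
    refine perm_of_mem_iff hnd hσ.2.1 (fun x => ?_)
    simp only [sL, List.mem_filter, decide_eq_true_eq]
    exact ⟨fun h => h.2, fun h => ⟨hσ.2.2.1 x h, h⟩⟩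
  exact ⟨hpw, hperm, by rw [hperm.length_eq, hσ.2.2.2.2.2], hsub⟩

theorem relabel_mem {n m : ℕ} {K : List ℕ} {σ : List (List ℕ)} (hσ : IsTail n m K σ) :
    relabel n σ ∈ PF m K ∧ sinv (relabel n σ) = sinv σ ∧
      sL n σ ∈ (List.sublistsLen m (pR n)).toFinset := by
  obtain ⟨hpw, hperm, hlen, hsub⟩ := sL_facts hσ
  have hnd : (sL n σ).Nodup := (nodup_pR n).sublist hsub
  set f : ℕ → ℕ := fun x => List.idxOf x (sL n σ) + 1 with hf
  have hmem : ∀ x ∈ σ.flatten, x ∈ sL n σ := fun x hx => hperm.symm.subset hx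
  have hg : ∀ x ∈ σ.flatten, ∀ y ∈ σ.flatten, (x < y ↔ f x < f y) := by
    intro x hx y hy
    rw [hf]
    simp only
    rw [← indexOf_lt_iff hpw (hmem x hx) (hmem y hy)]
    omega
  have hflat : (relabel n σ).flatten = σ.flatten.map f := by
    rw [relabel, ← List.map_flatten]
  refine ⟨mem_PF.2 ⟨⟨?_, ?_, ?_, ?_⟩, ?_⟩, ?_, ?_⟩
  · rintro B' hB'
    obtain ⟨B, hB, rfl⟩ := List.mem_map.1 hB'
    simp [hσ.1 B hB]
  · rw [hflat]
    refine List.Nodup.map_on ?_ hσ.2.1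
    intro x hx y hy hxy
    rw [hf] at hxy
    simp only at hxy
    exact (List.idxOf_inj (hmem x hx)).1 (by omega)
  · intro z
    rw [hflat]
    constructor
    · intro hz
      obtain ⟨x, hx, rfl⟩ := List.mem_map.1 hz
      have h1 : List.idxOf x (sL n σ) < (sL n σ).length :=
        List.idxOf_lt_length_iff.2 (hmem x hx)
      rw [hlen] at h1
      rw [hf]
      simp only
      omega
    · rintro ⟨h1, h2⟩
      have hj : z - 1 < (sL n σ).length := by omega
      refine List.mem_map.2 ⟨(sL n σ)[z-1], hperm.subset (List.getElem_mem hj), ?_⟩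
      rw [hf]
      simp only
      rw [List.Nodup.idxOf_getElem hnd]
      omega
  · exact chain_map hσ.1 hg hσ.2.2.2.1
  · rw [relabel, shape, List.map_map]
    have : (List.length ∘ List.map f) = List.length := by
      funext B; simp
    rw [this, ← shape, hσ.2.2.2.2.1]
  · exact sinv_map hσ.1 hg
  · rw [List.mem_toFinset, List.mem_sublistsLen]
    exact ⟨hsub, hlen⟩

theorem unlabel_mem {n m : ℕ} {K : List ℕ} {s : List ℕ} {L : List (List ℕ)}
    (hs : s <+ pR n) (hslen : s.length = m) (hL : L ∈ PF m K) :
    IsTail n m K (unlabel s L) ∧ sinv (unlabel s L) = sinv L := by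
  obtain ⟨hP, hsh⟩ := mem_PF.1 hL
  have hbound : ∀ y ∈ L.flatten, 1 ≤ y ∧ y ≤ m := fun y hy => (hP.2.2.1 y).1 hy
  have hspw : s.Pairwise (· < ·) := (pairwise_pR n).sublist hs
  set g : ℕ → ℕ := fun y => s.getD (y - 1) 0 with hgdef
  have hgget : ∀ (y : ℕ) (h : y - 1 < s.length), g y = s[y-1]'h := by
    intro y h
    rw [hgdef]
    simp only
    rw [List.getD_eq_getElem?_getD, List.getElem?_eq_getElem h]
    rfl
  have key : ∀ y ∈ L.flatten, ∀ y' ∈ L.flatten, y < y' → g y < g y' := by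
    intro y hy y' hy' hlt
    have h1 := hbound y hy
    have h2 := hbound y' hy'
    have hj : y - 1 < s.length := by omega
    have hj' : y' - 1 < s.length := by omega
    rw [hgget y hj, hgget y' hj']
    exact List.pairwise_iff_getElem.1 hspw _ _ hj hj' (by omega)
  have hg : ∀ y ∈ L.flatten, ∀ y' ∈ L.flatten, (y < y' ↔ g y < g y') := by
    intro y hy y' hy'
    refine ⟨key y hy y' hy', fun h => ?_⟩
    rcases lt_trichotomy y y' with h' | h' | h'
    · exact h'
    · subst h'; omega
    · exact absurd (key y' hy' y hy h') (by omega)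
  have hgin : ∀ y ∈ L.flatten, g y ∈ s := by
    intro y hy
    have h1 := hbound y hy
    have hj : y - 1 < s.length := by omega
    rw [hgget y hj]
    exact List.getElem_mem hj
  have hflat : (unlabel s L).flatten = L.flatten.map g := by
    rw [unlabel, ← List.map_flatten]
  refine ⟨⟨?_, ?_, ?_, ?_, ?_, ?_⟩, sinv_map hP.1 hg⟩
  · rintro B' hB'
    obtain ⟨B, hB, rfl⟩ := List.mem_map.1 hB'
    simp [hP.1 B hB]
  · rw [hflat]
    refine List.Nodup.map_on ?_ hP.2.1
    intro x hx y hy hxy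
    rcases lt_trichotomy x y with h' | h' | h'
    · exact absurd (key x hx y hy h') (by omega)
    · exact h'
    · exact absurd (key y hy x hx h') (by omega)
  · intro x hx
    rw [hflat] at hx
    obtain ⟨y, hy, rfl⟩ := List.mem_map.1 hx
    exact hs.subset (hgin y hy)
  · exact chain_map hP.1 hg hP.2.2.2
  · rw [unlabel, shape, List.map_map]
    have : (List.length ∘ List.map g) = List.length := by
      funext B; simp
    rw [this, ← shape, hsh]
  · rw [hflat, List.length_map, flatten_length hP]

theorem left_inv_lemma {n m : ℕ} {K : List ℕ} {σ : List (List ℕ)}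
    (hσ : IsTail n m K σ) : unlabel (sL n σ) (relabel n σ) = σ := by
  obtain ⟨hpw, hperm, hlen, hsub⟩ := sL_facts hσ
  have hnd : (sL n σ).Nodup := (nodup_pR n).sublist hsub
  rw [unlabel, relabel, List.map_map]
  refine (List.map_congr_left (fun B hB => ?_)).trans (List.map_id σ)
  simp only [Function.comp_apply, List.map_map]
  refine (List.map_congr_left (fun x hx => ?_)).trans (List.map_id B)
  simp only [Function.comp_apply, id]
  have hxf : x ∈ σ.flatten := List.mem_flatten.2 ⟨B, hB, hx⟩
  have hxs : x ∈ sL n σ := hperm.symm.subset hxf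
  have hix : List.idxOf x (sL n σ) < (sL n σ).length := List.idxOf_lt_length_iff.2 hxs
  rw [Nat.add_sub_cancel, List.getD_eq_getElem?_getD, List.getElem?_eq_getElem hix]
  simp [List.getElem_idxOf hix]

theorem right_inv_lemma {n m : ℕ} {K : List ℕ} {s : List ℕ} {L : List (List ℕ)}
    (hs : s <+ pR n) (hslen : s.length = m) (hL : L ∈ PF m K) :
    sL n (unlabel s L) = s ∧ relabel n (unlabel s L) = L := by
  obtain ⟨hP, hsh⟩ := mem_PF.1 hL
  have hbound : ∀ y ∈ L.flatten, 1 ≤ y ∧ y ≤ m := fun y hy => (hP.2.2.1 y).1 hy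
  have hspw : s.Pairwise (· < ·) := (pairwise_pR n).sublist hs
  have hsnd : s.Nodup := (nodup_pR n).sublist hs
  set g : ℕ → ℕ := fun y => s.getD (y - 1) 0 with hgdef
  have hgget : ∀ (y : ℕ) (h : y - 1 < s.length), g y = s[y-1]'h := by
    intro y h
    rw [hgdef]
    simp only
    rw [List.getD_eq_getElem?_getD, List.getElem?_eq_getElem h]
    rfl
  have hflat : (unlabel s L).flatten = L.flatten.map g := by
    rw [unlabel, ← List.map_flatten]
  have hfirst : sL n (unlabel s L) = s := by
    haveI : IsAntisymm ℕ (· ≤ ·) := ⟨fun a b h1 h2 => le_antisymm h1 h2⟩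
    refine (fun hp h1 h2 => List.Perm.eq_of_pairwise' (r := (· ≤ ·)) h1 h2 hp) ?_ ?_ ?_
    · refine perm_of_mem_iff ((nodup_pR n).sublist List.filter_sublist) hsnd
        (fun x => ?_)
      simp only [sL, List.mem_filter, decide_eq_true_eq, hflat]
      constructor
      · rintro ⟨_, hx⟩
        obtain ⟨y, hy, rfl⟩ := List.mem_map.1 hx
        have h1 := hbound y hy
        have hj : y - 1 < s.length := by omega
        rw [hgget y hj]
        exact List.getElem_mem hj
      · intro hx
        obtain ⟨j, hj, rfl⟩ := List.mem_iff_getElem.1 hx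
        refine ⟨hs.subset (List.getElem_mem hj), ?_⟩
        refine List.mem_map.2 ⟨j + 1, ?_, ?_⟩
        · refine (hP.2.2.1 (j+1)).2 ⟨by omega, by rw [← hslen]; omega⟩
        · exact hgget (j+1) (by simpa using hj)
    · exact List.Pairwise.imp (fun h => le_of_lt h)
        ((pairwise_pR n).sublist List.filter_sublist)
    · exact List.Pairwise.imp (fun h => le_of_lt h) hspw
  refine ⟨hfirst, ?_⟩
  rw [relabel, hfirst, unlabel, List.map_map]
  refine (List.map_congr_left (fun B hB => ?_)).trans (List.map_id L)
  simp only [Function.comp_apply, List.map_map]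
  refine (List.map_congr_left (fun y hy => ?_)).trans (List.map_id B)
  simp only [Function.comp_apply, id]
  have hyf : y ∈ L.flatten := List.mem_flatten.2 ⟨B, hB, hy⟩
  have h1 := hbound y hyf
  have hj : y - 1 < s.length := by rw [hslen]; omega
  have h2 : s.getD (y - 1) 0 = s[y-1]'hj := hgget y hj
  rw [h2, List.Nodup.idxOf_getElem hsnd]
  omega

theorem relabel_lemma (q : ℝ) (n m : ℕ) (K : List ℕ) :
    ∑ σ ∈ TF n m K, q ^ sinv σ = (n.choose m : ℝ) * ∑ L ∈ PF m K, q ^ sinv L := by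
  classical
  have key : ∑ σ ∈ TF n m K, q ^ sinv σ =
      ∑ p ∈ (List.sublistsLen m (pR n)).toFinset ×ˢ PF m K, q ^ sinv p.2 := by
    refine Finset.sum_nbij' (fun σ => (sL n σ, relabel n σ))
      (fun p => unlabel p.1 p.2) ?_ ?_ ?_ ?_ ?_
    · intro σ hσ
      rw [mem_TF] at hσ
      obtain ⟨h1, _, h3⟩ := relabel_mem hσ
      exact Finset.mem_product.2 ⟨h3, h1⟩
    · rintro ⟨s, L⟩ hp
      rw [Finset.mem_product] at hp
      obtain ⟨hsm, hLm⟩ := hp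
      rw [List.mem_toFinset, List.mem_sublistsLen] at hsm
      exact mem_TF.2 (unlabel_mem hsm.1 hsm.2 hLm).1
    · intro σ hσ
      exact left_inv_lemma (mem_TF.1 hσ)
    · rintro ⟨s, L⟩ hp
      rw [Finset.mem_product] at hp
      obtain ⟨hsm, hLm⟩ := hp
      rw [List.mem_toFinset, List.mem_sublistsLen] at hsm
      obtain ⟨h1, h2⟩ := right_inv_lemma hsm.1 hsm.2 hLm
      rw [Prod.mk.injEq]
      exact ⟨h1, h2⟩
    · intro σ hσ
      rw [mem_TF] at hσ
      exact (congrArg (q ^ ·) (relabel_mem hσ).2.1).symm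
  rw [key, Finset.sum_product]
  have : ∀ s ∈ (List.sublistsLen m (pR n)).toFinset,
      (∑ L ∈ PF m K, q ^ sinv (s, L).2) = ∑ L ∈ PF m K, q ^ sinv L := by
    intro s _; rfl
  rw [Finset.sum_congr rfl this, Finset.sum_const, List.toFinset_card_of_nodup
    (List.nodup_sublistsLen m (nodup_pR n)), List.length_sublistsLen, length_pR,
    nsmul_eq_mul]

end PP

/-- the generating functions `Q_I` satisfy
`q·i₁·Q_I(q) + Q_{(i₁+i₂,i₃,…,i_r)}(q) = i₁·Q_I(q) + (n!/(n−i₁)!)·q^{i₁}·Q_{(i₂,…,i_r)}(q)`. -/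
theorem sinv_generating_function_recursion
    (n i₁ i₂ : ℕ) (J : List ℕ) (h₁ : 0 < i₁) (h₂ : 0 < i₂) (hJ : ∀ j ∈ J, 0 < j)
    (hsum : (i₁ :: i₂ :: J).sum = n) (q : ℝ) :
    q * i₁ * Q q n (i₁ :: i₂ :: J) + Q q n ((i₁ + i₂) :: J) =
      (i₁ : ℝ) * Q q n (i₁ :: i₂ :: J) +
        (Nat.factorial n : ℝ) / (Nat.factorial (n - i₁) : ℝ) * q ^ i₁ *
          Q q (n - i₁) (i₂ :: J) := by
  open PP in
  have hsum' : i₁ + (i₂ + J.sum) = n := by simpa using hsum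
  have hin : i₁ + (n - i₁) = n := by omega
  have hi₁n : i₁ ≤ n := by omega
  rw [Q_eq q n (i₁ :: i₂ :: J), Q_eq q n ((i₁ + i₂) :: J), Q_eq q (n - i₁) (i₂ :: J)]
  rw [split_lemma q n (n - i₁) i₁ i₂ hin h₁ J, merge_lemma q n (n - i₁) i₁ i₂ hin h₁ h₂ J]
  have hrel := relabel_lemma q n (n - i₁) (i₂ :: J)
  have hchoose : (n.choose (n - i₁) : ℝ) = (n.choose i₁ : ℝ) := by
    rw [Nat.choose_symm hi₁n]
  have hfact : (n.factorial : ℝ) / ((n - i₁).factorial : ℝ) =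
      (n.choose i₁ : ℝ) * (i₁.factorial : ℝ) := by
    have h := Nat.choose_mul_factorial_mul_factorial hi₁n
    rw [div_eq_iff (by exact_mod_cast (Nat.factorial_pos (n - i₁)).ne')]
    exact_mod_cast h.symm
  rw [hfact]
  have hC : (n.choose i₁ : ℝ) * (i₁.factorial : ℝ) * q ^ i₁ *
      ∑ L ∈ PF (n - i₁) (i₂ :: J), q ^ sinv L =
      (i₁.factorial : ℝ) * q ^ i₁ * ∑ σ ∈ TF n (n - i₁) (i₂ :: J), q ^ sinv σ := by
    rw [hrel, hchoose]; ring
  rw [hC]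
  rw [Finset.mul_sum, Finset.mul_sum, Finset.mul_sum, ← Finset.sum_add_distrib,
    ← Finset.sum_add_distrib]
  refine Finset.sum_congr rfl (fun σ hσF => ?_)
  rw [mem_TF] at hσF
  have hnd := nodup_co n σ
  have hblast_mem : blast σ ∈ σ.flatten := by
    obtain ⟨v, M, rfl, hv1, hv2, hv3⟩ := tail_destruct hσF
    exact List.mem_flatten.2 ⟨v, by simp, getLastD_mem hv3 0⟩
  have hb : blast σ ∉ co n σ := fun h => (mem_co.1 h).2 hblast_mem
  have hlen : (co n σ).length = i₁ := by rw [length_co hσF]; omega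
  have hkey := scalar_key h₁ hnd hb hlen q
  linear_combination (q ^ sinv σ) * hkey
end

section
/- Fix a composition I = (i_1, …, i_r) of n with r ≥ 2 and set I^1 = (i_1+i_2, i_3, …, i_r). Let E_1 be the set of pairs (τ, x) where τ is a permutition of size n with c(τ) = I and x is one of the i_1 letters of the first block of τ (the block whose last letter is smallest); let E_2 be the set of permutitions τ of size n with c(τ) = I^1; let E_3 be the set of pairs (π, w) where π is a permutition of size n − i_1 with c(π) = (i_2, …, i_r) and w is a word of length i_1 with pairwise distinct letters from {1, …, n}. Then there exists a bijection φ from the disjoint union E_1 ⊔ E_2 onto the disjoint union E_1 ⊔ E_3 such that: (a) if (τ, x) ∈ E_1 and φ(τ, x) = (π, y) ∈ E_1, then sinv(π) = sinv(τ) + 1; (b) if (τ, x) ∈ E_1 and φ(τ, x) = (π, w) ∈ E_3, then sinv(π) = sinv(τ) − (i_1 − 1); (c) if τ ∈ E_2 and φ(τ) = (π, y) ∈ E_1, then sinv(π) = sinv(τ); (d) if τ ∈ E_2 and φ(τ) = (π, w) ∈ E_3, then sinv(π) = sinv(τ) − i_1. -/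
namespace SinvBij
open List

/-! ### Transpositions applied to words -/

def tr (a b : ℕ) (l : List ℕ) : List ℕ := l.map (Equiv.swap a b)

@[simp] lemma tr_length (a b : ℕ) (l : List ℕ) : (tr a b l).length = l.length := by
  simp [tr]

lemma tr_tr (a b : ℕ) (l : List ℕ) : tr a b (tr a b l) = l := by
  simp only [tr, List.map_map]
  have h : (⇑(Equiv.swap a b) ∘ ⇑(Equiv.swap a b)) = id := by
    funext x; simp
  simp [h]

lemma tr_comm (a b : ℕ) (l : List ℕ) : tr a b l = tr b a l := by
  simp [tr, Equiv.swap_comm]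

lemma tr_ne_nil {a b : ℕ} {l : List ℕ} (h : l ≠ []) : tr a b l ≠ [] := by
  simp [tr, h]

lemma mem_tr {a b : ℕ} (l : List ℕ) (ha : a ∈ l) (hb : b ∈ l) {x : ℕ} :
    x ∈ tr a b l ↔ x ∈ l := by
  constructor
  · rintro h
    rcases List.mem_map.1 h with ⟨y, hy, rfl⟩
    rcases eq_or_ne y a with rfl | hya
    · simpa using hb
    rcases eq_or_ne y b with rfl | hyb
    · simpa using ha
    · rwa [Equiv.swap_apply_of_ne_of_ne hya hyb]
  · intro h
    rcases eq_or_ne x a with rfl | hxa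
    · exact List.mem_map.2 ⟨b, hb, by simp⟩
    rcases eq_or_ne x b with rfl | hxb
    · exact List.mem_map.2 ⟨a, ha, by simp⟩
    · exact List.mem_map.2 ⟨x, h, Equiv.swap_apply_of_ne_of_ne hxa hxb⟩

lemma tr_nodup {a b : ℕ} {l : List ℕ} (h : l.Nodup) : (tr a b l).Nodup :=
  h.map (Equiv.injective _)

lemma tr_toFinset {a b : ℕ} (l : List ℕ) (ha : a ∈ l) (hb : b ∈ l) :
    (tr a b l).toFinset = l.toFinset := by
  ext x; simp [List.mem_toFinset, mem_tr l ha hb]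

lemma tr_perm {a b : ℕ} {l : List ℕ} (h : l.Nodup) (ha : a ∈ l) (hb : b ∈ l) :
    tr a b l ~ l :=
  List.perm_of_nodup_nodup_toFinset_eq (tr_nodup h) h (tr_toFinset l ha hb)

lemma getLastD_mem : ∀ {l : List ℕ}, l ≠ [] → l.getLastD 0 ∈ l
  | [a], _ => by simp
  | a :: b :: t, _ => by
    have := getLastD_mem (l := b :: t) (by simp)
    simp only [List.getLastD_cons] at *
    exact List.mem_cons_of_mem _ this

lemma getLastD_map (f : ℕ → ℕ) {l : List ℕ} (h : l ≠ []) :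
    (l.map f).getLastD 0 = f (l.getLastD 0) := by
  induction l with
  | nil => simp at h
  | cons a t ih =>
    cases t with
    | nil => simp
    | cons b t' => simpa using ih (by simp)

lemma tr_getLastD (a b : ℕ) {l : List ℕ} (h : l ≠ []) :
    (tr a b l).getLastD 0 = Equiv.swap a b (l.getLastD 0) := getLastD_map _ h

lemma getLastD_append {l l' : List ℕ} (h : l' ≠ []) :
    (l ++ l').getLastD 0 = l'.getLastD 0 := by
  induction l with
  | nil => simp
  | cons a t ih =>
    cases t with
    | nil => cases l' with
      | nil => simp at h
      | cons b t' => simp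
    | cons b t' => simpa using ih

/-! ### min/max of a word -/

def maxL (l : List ℕ) : ℕ := (l.max?).getD 0
def minL (l : List ℕ) : ℕ := (l.min?).getD 0

lemma minL_spec {l : List ℕ} (h : l ≠ []) : minL l ∈ l ∧ ∀ b ∈ l, minL l ≤ b := by
  obtain ⟨a, t, rfl⟩ := List.exists_cons_of_ne_nil h
  have h1 : (a :: t).min? = some ((a :: t).min?.getD 0) := by
    rw [List.min?_cons]; rfl
  have := List.min?_eq_some_iff.1 h1
  simpa [minL] using this

lemma maxL_spec {l : List ℕ} (h : l ≠ []) : maxL l ∈ l ∧ ∀ b ∈ l, b ≤ maxL l := by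
  obtain ⟨a, t, rfl⟩ := List.exists_cons_of_ne_nil h
  have h1 : (a :: t).max? = some ((a :: t).max?.getD 0) := by
    rw [List.max?_cons]; rfl
  have := List.max?_eq_some_iff.1 h1
  simpa [maxL] using this

/-! ### counting lemmas -/

lemma countP_split (l : List ℕ) (p q r : ℕ → Bool)
    (hpq : ∀ y ∈ l, p y = (q y || r y)) (hdis : ∀ y ∈ l, ¬(q y = true ∧ r y = true)) :
    l.countP p = l.countP q + l.countP r := by
  induction l with
  | nil => simp
  | cons a t ih =>
    have ih' := ih (fun y hy => hpq y (mem_cons_of_mem _ hy))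
      (fun y hy => hdis y (mem_cons_of_mem _ hy))
    have hpa := hpq a mem_cons_self
    have hda := hdis a mem_cons_self
    by_cases hq : q a = true <;> by_cases hr : r a = true
    · exact absurd ⟨hq, hr⟩ hda
    · simp [List.countP_cons, hpa, hq, hr, ih']; omega
    · simp [List.countP_cons, hpa, hq, hr, ih']; omega
    · simp at hq hr
      simp [List.countP_cons, hpa, hq, hr, ih']

lemma countP_eq_one (l : List ℕ) (hnd : l.Nodup) (p : ℕ → Bool) (a : ℕ)
    (ha : a ∈ l) (hpa : p a = true) (huniq : ∀ y ∈ l, p y = true → y = a) :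
    l.countP p = 1 := by
  induction l with
  | nil => simp at ha
  | cons b t ih =>
    rcases List.mem_cons.1 ha with rfl | ha'
    · have : t.countP p = 0 := by
        rw [List.countP_eq_zero]
        intro y hy hpy
        have := huniq y (mem_cons_of_mem _ hy) hpy
        subst this
        exact (List.nodup_cons.1 hnd).1 hy
      simp [List.countP_cons, hpa, this]
    · have hba : p b ≠ true := by
        intro hpb
        have := huniq b mem_cons_self hpb
        subst this
        exact (List.nodup_cons.1 hnd).1 ha'
      have := ih (List.nodup_cons.1 hnd).2 ha'
        (fun y hy hpy => huniq y (mem_cons_of_mem _ hy) hpy)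
      simp [List.countP_cons, hba, this]

lemma sinv_cons (B : List ℕ) (M : List (List ℕ)) :
    sinv (B :: M) = (B.countP fun x => decide (B.getLastD 0 < x)) + sinv M := by
  simp [sinv]

/-! ### partitions of a finset -/

def POn (C : Finset ℕ) (L : List (List ℕ)) : Prop :=
  (∀ B ∈ L, B ≠ []) ∧ L.flatten.Nodup ∧ (∀ x, x ∈ L.flatten ↔ x ∈ C) ∧
    List.Chain' (· < ·) (L.map fun B => B.getLastD 0)

lemma isPermutition_iff_POn (n : ℕ) (L : List (List ℕ)) :
    IsPermutition n L ↔ POn (Finset.Icc 1 n) L := by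
  unfold IsPermutition POn
  simp [Finset.mem_Icc]

/-! ### standardization -/

def stdf (C : Finset ℕ) (x : ℕ) : ℕ := (C.filter (· ≤ x)).card
def unstdf (C : Finset ℕ) (y : ℕ) : ℕ := (C.filter (fun x => stdf C x = y)).sum id

lemma stdf_mono {C : Finset ℕ} {x y : ℕ} (hy : y ∈ C) (hxy : x < y) :
    stdf C x < stdf C y := by
  apply Finset.card_lt_card
  constructor
  · intro z hz
    simp only [Finset.mem_filter] at hz ⊢
    exact ⟨hz.1, le_trans hz.2 (le_of_lt hxy)⟩
  · intro hsub
    have : y ∈ C.filter (· ≤ x) := hsub (by simp [hy])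
    simp only [Finset.mem_filter] at this
    omega

lemma stdf_mem {C : Finset ℕ} {x : ℕ} (hx : x ∈ C) :
    stdf C x ∈ Finset.Icc 1 C.card := by
  simp only [Finset.mem_Icc, stdf]
  constructor
  · have : x ∈ C.filter (· ≤ x) := by simp [hx]
    exact Finset.card_pos.2 ⟨x, this⟩
  · exact Finset.card_le_card (Finset.filter_subset _ _)

lemma stdf_injOn {C : Finset ℕ} {x y : ℕ} (hx : x ∈ C) (hy : y ∈ C)
    (h : stdf C x = stdf C y) : x = y := by
  rcases lt_trichotomy x y with h' | h' | h'
  · exact absurd h (ne_of_lt (stdf_mono hy h'))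
  · exact h'
  · exact absurd h.symm (ne_of_lt (stdf_mono hx h'))

lemma stdf_surj {C : Finset ℕ} {j : ℕ} (hj : j ∈ Finset.Icc 1 C.card) :
    ∃ x ∈ C, stdf C x = j := by
  have himg : (C.image (stdf C)).card = C.card :=
    Finset.card_image_of_injOn (fun x hx y hy => stdf_injOn (by simpa using hx) (by simpa using hy))
  have hsub : C.image (stdf C) ⊆ Finset.Icc 1 C.card := by
    intro z hz
    rcases Finset.mem_image.1 hz with ⟨x, hx, rfl⟩
    exact stdf_mem hx
  have heq : C.image (stdf C) = Finset.Icc 1 C.card :=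
    Finset.eq_of_subset_of_card_le hsub (by rw [himg, Nat.card_Icc]; omega)
  rw [← heq] at hj
  rcases Finset.mem_image.1 hj with ⟨x, hx, hfx⟩
  exact ⟨x, hx, hfx⟩

lemma unstdf_stdf {C : Finset ℕ} {x : ℕ} (hx : x ∈ C) : unstdf C (stdf C x) = x := by
  have h : C.filter (fun z => stdf C z = stdf C x) = {x} := by
    ext z
    simp only [Finset.mem_filter, Finset.mem_singleton]
    constructor
    · rintro ⟨hz, he⟩; exact stdf_injOn hz hx he
    · rintro rfl; exact ⟨hx, rfl⟩
  simp [unstdf, h]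

lemma stdf_unstdf {C : Finset ℕ} {j : ℕ} (hj : j ∈ Finset.Icc 1 C.card) :
    unstdf C j ∈ C ∧ stdf C (unstdf C j) = j := by
  obtain ⟨x, hx, rfl⟩ := stdf_surj hj
  rw [unstdf_stdf hx]
  exact ⟨hx, rfl⟩

def stdL (C : Finset ℕ) (L : List (List ℕ)) : List (List ℕ) := L.map (List.map (stdf C))
def unstdL (C : Finset ℕ) (L : List (List ℕ)) : List (List ℕ) := L.map (List.map (unstdf C))

section transport
variable {C C' : Finset ℕ} {f : ℕ → ℕ} {L : List (List ℕ)}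
  (hmono : ∀ x ∈ C, ∀ y ∈ C, x < y → f x < f y)

include hmono in
lemma lt_iff_map_lt {x y : ℕ} (hx : x ∈ C) (hy : y ∈ C) : f x < f y ↔ x < y := by
  constructor
  · intro h
    rcases lt_trichotomy x y with h' | h' | h'
    · exact h'
    · subst h'; omega
    · exact absurd (hmono _ hy _ hx h') (by omega)
  · exact hmono _ hx _ hy

include hmono in
lemma POn_map (hmem : ∀ x ∈ C, f x ∈ C') (hsurj : ∀ y ∈ C', ∃ x ∈ C, f x = y)
    (h : POn C L) :
    POn C' (L.map (List.map f)) ∧ shape (L.map (List.map f)) = shape L ∧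
      sinv (L.map (List.map f)) = sinv L := by
  obtain ⟨hne, hnd, hm, hch⟩ := h
  have hflat : (L.map (List.map f)).flatten = L.flatten.map f := List.map_flatten.symm
  have hsubC : ∀ x ∈ L.flatten, x ∈ C := fun x hx => (hm x).1 hx
  refine ⟨⟨?_, ?_, ?_, ?_⟩, ?_, ?_⟩
  · intro B hB
    rcases List.mem_map.1 hB with ⟨B₀, hB₀, rfl⟩
    simpa using hne B₀ hB₀
  · rw [hflat]
    exact hnd.map_on (fun x hx y hy hxy => by
      rcases lt_trichotomy x y with h' | h' | h'
      · exact absurd hxy (ne_of_lt (hmono _ (hsubC x hx) _ (hsubC y hy) h'))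
      · exact h'
      · exact absurd hxy.symm (ne_of_lt (hmono _ (hsubC y hy) _ (hsubC x hx) h')))
  · intro x
    rw [hflat]
    constructor
    · intro hx
      rcases List.mem_map.1 hx with ⟨y, hy, rfl⟩
      exact hmem _ (hsubC y hy)
    · intro hx
      obtain ⟨z, hz, rfl⟩ := hsurj x hx
      exact List.mem_map.2 ⟨z, (hm z).2 hz, rfl⟩
  · have hmap : (L.map (List.map f)).map (fun B => B.getLastD 0) =
        (L.map fun B => B.getLastD 0).map f := by
      rw [List.map_map, List.map_map]
      apply List.map_congr_left
      intro B hB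
      simpa using (getLastD_map f (hne B hB))
    rw [hmap]
    have hlastC : ∀ y ∈ (L.map fun B => B.getLastD 0), y ∈ C := by
      intro y hy
      rcases List.mem_map.1 hy with ⟨B, hB, rfl⟩
      exact hsubC _ (List.mem_flatten.2 ⟨B, hB, getLastD_mem (hne B hB)⟩)
    rw [List.Chain', List.isChain_iff_pairwise] at hch
    apply List.Pairwise.isChain
    rw [List.pairwise_map]
    exact hch.imp_of_mem (fun ha hb hr => hmono _ (hlastC _ ha) _ (hlastC _ hb) hr)
  · simp [shape]
  · unfold sinv
    rw [List.map_map]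
    congr 1
    apply List.map_congr_left
    intro B hB
    have hBne := hne B hB
    have hBsub : ∀ x ∈ B, x ∈ C := fun x hx =>
      hsubC x (List.mem_flatten.2 ⟨B, hB, hx⟩)
    simp only [Function.comp]
    rw [List.countP_map]
    apply List.countP_congr
    intro x hx
    simp only [Function.comp, decide_eq_true_eq]
    rw [getLastD_map f hBne]
    exact lt_iff_map_lt hmono (hBsub _ (getLastD_mem hBne)) (hBsub _ hx)

lemma mapL_mapL {g : ℕ → ℕ} (hg : ∀ x ∈ L.flatten, g (f x) = x) :
    (L.map (List.map f)).map (List.map g) = L := by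
  rw [List.map_map]
  conv_rhs => rw [← List.map_id L]
  apply List.map_congr_left
  intro B hB
  simp only [Function.comp, List.map_map, id]
  conv_rhs => rw [← List.map_id B]
  apply List.map_congr_left
  intro x hx
  exact hg x (List.mem_flatten.2 ⟨B, hB, hx⟩)
end transport

lemma std_spec {C : Finset ℕ} {m : ℕ} (hcard : C.card = m) {L : List (List ℕ)}
    (h : POn C L) :
    POn (Finset.Icc 1 m) (stdL C L) ∧ shape (stdL C L) = shape L ∧
      sinv (stdL C L) = sinv L ∧ unstdL C (stdL C L) = L := by
  subst hcard
  have hmono : ∀ x ∈ C, ∀ y ∈ C, x < y → stdf C x < stdf C y :=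
    fun x _ y hy hxy => stdf_mono hy hxy
  have h1 := POn_map hmono (fun x hx => stdf_mem hx) (fun y hy =>
    ⟨unstdf C y, (stdf_unstdf hy).1, (stdf_unstdf hy).2⟩) h
  refine ⟨h1.1, h1.2.1, h1.2.2, ?_⟩
  exact mapL_mapL (fun x hx => unstdf_stdf ((h.2.2.1 x).1 hx))

lemma unstd_spec {C : Finset ℕ} {m : ℕ} (hcard : C.card = m) {L : List (List ℕ)}
    (h : POn (Finset.Icc 1 m) L) :
    POn C (unstdL C L) ∧ shape (unstdL C L) = shape L ∧
      sinv (unstdL C L) = sinv L ∧ stdL C (unstdL C L) = L := by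
  subst hcard
  have hmono : ∀ x ∈ Finset.Icc 1 C.card, ∀ y ∈ Finset.Icc 1 C.card, x < y →
      unstdf C x < unstdf C y := by
    intro x hx y hy hxy
    rcases lt_trichotomy (unstdf C x) (unstdf C y) with h' | h' | h'
    · exact h'
    · have := (stdf_unstdf hx).2
      rw [h', (stdf_unstdf hy).2] at this
      omega
    · have := stdf_mono (stdf_unstdf hx).1 h'
      rw [(stdf_unstdf hx).2, (stdf_unstdf hy).2] at this
      omega
  have h1 := POn_map hmono (fun x hx => (stdf_unstdf hx).1)
    (fun y hy => ⟨stdf C y, stdf_mem hy, unstdf_stdf hy⟩) h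
  refine ⟨h1.1, h1.2.1, h1.2.2, ?_⟩
  exact mapL_mapL (fun x hx => (stdf_unstdf ((h.2.2.1 x).1 hx)).2)

def Cmpl (n : ℕ) (D : List ℕ) : Finset ℕ := Finset.Icc 1 n \ D.toFinset

lemma mem_Cmpl {n : ℕ} {D : List ℕ} {x : ℕ} :
    x ∈ Cmpl n D ↔ (1 ≤ x ∧ x ≤ n) ∧ x ∉ D := by
  simp [Cmpl, Finset.mem_Icc]

lemma Cmpl_card {n : ℕ} {D : List ℕ} (hnd : D.Nodup) (hsub : ∀ x ∈ D, 1 ≤ x ∧ x ≤ n) :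
    (Cmpl n D).card = n - D.length := by
  rw [Cmpl, Finset.card_sdiff_of_subset (by
    intro x hx
    simp only [List.mem_toFinset] at hx
    simp [Finset.mem_Icc]
    exact hsub x hx)]
  rw [List.toFinset_card_of_nodup hnd, Nat.card_Icc]
  omega

lemma Cmpl_congr {n : ℕ} {D D' : List ℕ} (h : D.toFinset = D'.toFinset) :
    Cmpl n D = Cmpl n D' := by
  rw [Cmpl, Cmpl, h]

/-! ### structure helpers -/

lemma chain'_first {B₁ B₂ : List ℕ} {T : List (List ℕ)}
    (h : List.Chain' (· < ·) ((B₁ :: B₂ :: T).map fun B => B.getLastD 0)) :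
    B₁.getLastD 0 < B₂.getLastD 0 := by
  simp only [List.map_cons] at h
  exact (List.isChain_cons_cons.1 h).1

lemma isPermutition_congr {n : ℕ} {L L' : List (List ℕ)} (h : IsPermutition n L)
    (hne : ∀ B ∈ L', B ≠ []) (hperm : L'.flatten ~ L.flatten)
    (hch : List.Chain' (· < ·) (L'.map fun B => B.getLastD 0)) : IsPermutition n L' :=
  ⟨hne, hperm.symm.nodup h.2.1, fun x => (hperm.mem_iff).trans ((h.2.2.1) x), hch⟩

lemma POn_of_head {n : ℕ} {D : List ℕ} {M : List (List ℕ)}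
    (hnd : (D ++ M.flatten).Nodup) (hmem : ∀ x, x ∈ D ++ M.flatten ↔ 1 ≤ x ∧ x ≤ n)
    (hne : ∀ B ∈ M, B ≠ []) (hch : List.Chain' (· < ·) (M.map fun B => B.getLastD 0)) :
    POn (Cmpl n D) M := by
  have hdisj := List.disjoint_of_nodup_append hnd
  refine ⟨hne, hnd.of_append_right, ?_, hch⟩
  intro x
  rw [mem_Cmpl]
  constructor
  · intro hx
    exact ⟨(hmem x).1 (List.mem_append_right _ hx), fun hxD => hdisj hxD hx⟩
  · rintro ⟨hxI, hxD⟩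
    rcases List.mem_append.1 ((hmem x).2 hxI) with h' | h'
    · exact absurd h' hxD
    · exact h'

lemma merge_of_POn {n : ℕ} {D : List ℕ} {M : List (List ℕ)}
    (hD : D.Nodup) (hDI : ∀ x ∈ D, 1 ≤ x ∧ x ≤ n) (h : POn (Cmpl n D) M) :
    (D ++ M.flatten).Nodup ∧ (∀ x, x ∈ D ++ M.flatten ↔ 1 ≤ x ∧ x ≤ n) := by
  obtain ⟨-, hnd, hmem, -⟩ := h
  constructor
  · rw [List.nodup_append]
    refine ⟨hD, hnd, ?_⟩
    intro x hxD y hyM hxy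
    subst hxy
    have := (hmem x).1 hyM
    rw [mem_Cmpl] at this
    exact this.2 hxD
  · intro x
    rw [List.mem_append]
    constructor
    · rintro (hx | hx)
      · exact hDI x hx
      · have := (hmem x).1 hx
        rw [mem_Cmpl] at this
        exact this.1
    · intro hx
      by_cases hxD : x ∈ D
      · exact Or.inl hxD
      · exact Or.inr ((hmem x).2 (mem_Cmpl.2 ⟨hx, hxD⟩))

lemma mem_filter_tr {a b : ℕ} {l : List ℕ} (ha : a ∈ l) (hb : b ∈ l) {p : ℕ → Bool} {z : ℕ} :
    z ∈ (tr a b l).filter p ↔ z ∈ l ∧ p z := by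
  rw [List.mem_filter, mem_tr l ha hb]

/-! ### the maps -/

def F (n i₁ : ℕ) :
    (List (List ℕ) × ℕ) ⊕ (List (List ℕ)) → (List (List ℕ) × ℕ) ⊕ (List (List ℕ) × List ℕ)
  | Sum.inl (B₁ :: M, x) =>
      if B₁.filter (fun y => decide (y < B₁.getLastD 0)) = [] then
        Sum.inr (stdL (Cmpl n B₁) M, tr (B₁.getLastD 0) x B₁)
      else
        Sum.inl ((tr (B₁.getLastD 0) (maxL (B₁.filter (fun y => decide (y < B₁.getLastD 0)))) B₁) :: M,
          Equiv.swap (B₁.getLastD 0) (maxL (B₁.filter (fun y => decide (y < B₁.getLastD 0)))) x)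
  | Sum.inl ([], _) => Sum.inr ([], [])
  | Sum.inr (B :: T) =>
      if (B.take i₁).filter (fun y => decide (y < B.getLastD 0)) = [] then
        Sum.inr (stdL (Cmpl n (B.take i₁)) (B.drop i₁ :: T), B.take i₁)
      else
        Sum.inl ((tr (maxL ((B.take i₁).filter (fun y => decide (y < B.getLastD 0))))
            ((B.take i₁).getLastD 0) (B.take i₁)) :: B.drop i₁ :: T, (B.take i₁).getLastD 0)
  | Sum.inr [] => Sum.inr ([], [])

def G (n i₁ : ℕ) :
    (List (List ℕ) × ℕ) ⊕ (List (List ℕ) × List ℕ) → (List (List ℕ) × ℕ) ⊕ (List (List ℕ))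
  | Sum.inl (B₁ :: B₂ :: T, y) =>
      if B₁.filter (fun s => decide (B₁.getLastD 0 < s ∧ s < B₂.getLastD 0)) = [] then
        Sum.inr ((tr (B₁.getLastD 0) y B₁ ++ B₂) :: T)
      else
        Sum.inl ((tr (B₁.getLastD 0)
            (minL (B₁.filter (fun s => decide (B₁.getLastD 0 < s ∧ s < B₂.getLastD 0)))) B₁) :: B₂ :: T,
          Equiv.swap (B₁.getLastD 0)
            (minL (B₁.filter (fun s => decide (B₁.getLastD 0 < s ∧ s < B₂.getLastD 0)))) y)
  | Sum.inl (_, _) => Sum.inr []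
  | Sum.inr (π, w) =>
      if w.filter (fun y => decide (y < ((unstdL (Cmpl n w) π).headD []).getLastD 0)) = [] then
        Sum.inr ((w ++ (unstdL (Cmpl n w) π).headD []) :: (unstdL (Cmpl n w) π).tail)
      else
        Sum.inl ((tr (minL w) (w.getLastD 0) w) :: unstdL (Cmpl n w) π, w.getLastD 0)

/-! ### predicates -/

abbrev P1 (n i₁ i₂ : ℕ) (J : List ℕ) (p : List (List ℕ) × ℕ) : Prop :=
  IsPermutition n p.1 ∧ shape p.1 = i₁ :: i₂ :: J ∧ p.2 ∈ p.1.headD []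

abbrev P2 (n i₁ i₂ : ℕ) (J : List ℕ) (L : List (List ℕ)) : Prop :=
  IsPermutition n L ∧ shape L = (i₁ + i₂) :: J

abbrev P3 (n i₁ i₂ : ℕ) (J : List ℕ) (p : List (List ℕ) × List ℕ) : Prop :=
  IsPermutition (n - i₁) p.1 ∧ shape p.1 = i₂ :: J ∧ p.2.length = i₁ ∧ p.2.Nodup ∧
    ∀ x ∈ p.2, 1 ≤ x ∧ x ≤ n

def Rel (i₁ : ℕ) :
    (List (List ℕ) × ℕ) ⊕ (List (List ℕ)) → (List (List ℕ) × ℕ) ⊕ (List (List ℕ) × List ℕ) → Prop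
  | Sum.inl τ, Sum.inl π => sinv π.1 = sinv τ.1 + 1
  | Sum.inl τ, Sum.inr π => sinv τ.1 = sinv π.1 + (i₁ - 1)
  | Sum.inr τ, Sum.inl π => sinv π.1 = sinv τ
  | Sum.inr τ, Sum.inr π => sinv τ = sinv π.1 + i₁

lemma F_spec (n i₁ i₂ : ℕ) (J : List ℕ) (h₁ : 0 < i₁) (h₂ : 0 < i₂)
    (e : (List (List ℕ) × ℕ) ⊕ (List (List ℕ)))
    (he : Sum.elim (P1 n i₁ i₂ J) (P2 n i₁ i₂ J) e) :
    Sum.elim (P1 n i₁ i₂ J) (P3 n i₁ i₂ J) (F n i₁ e) ∧ G n i₁ (F n i₁ e) = e ∧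
      Rel i₁ e (F n i₁ e) := by
  rcases e with ⟨L, x⟩ | L
  · obtain ⟨hperm, hshape, hx⟩ := he
    rcases L with _ | ⟨B₁, M⟩
    · simp [shape] at hshape
    rcases M with _ | ⟨B₂, T⟩
    · simp [shape] at hshape
    simp only [shape, List.map_cons, List.cons.injEq] at hshape
    obtain ⟨hlen1, hlen2, hshT⟩ := hshape
    simp only [List.headD_cons] at hx
    have hB₁ne : B₁ ≠ [] := hperm.1 _ (by simp)
    have hB₂ne : B₂ ≠ [] := hperm.1 _ (by simp)
    have hch := hperm.2.2.2
    have hal : B₁.getLastD 0 < B₂.getLastD 0 := chain'_first hch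
    have hB₁nd : B₁.Nodup := by
      have := hperm.2.1
      simp only [List.flatten_cons] at this
      exact this.of_append_left
    have hB₁I : ∀ z ∈ B₁, 1 ≤ z ∧ z ≤ n := by
      intro z hz
      refine (hperm.2.2.1 z).1 ?_
      simp only [List.flatten_cons, List.mem_append]
      exact Or.inl hz
    have haB : B₁.getLastD 0 ∈ B₁ := getLastD_mem hB₁ne
    simp only [F]
    set a := B₁.getLastD 0 with haa
    by_cases hP : B₁.filter (fun y => decide (y < a)) = []
    · -- a is the minimum of B₁ : move to E₃
      rw [if_pos hP]
      have hamin : ∀ z ∈ B₁, a ≤ z := by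
        intro z hz
        by_contra h'
        exact absurd (by simpa using (List.filter_eq_nil_iff.1 hP) z hz) (by omega)
      have hcard : (Cmpl n B₁).card = n - i₁ := by
        rw [Cmpl_card hB₁nd hB₁I, hlen1]
      have hPOn : POn (Cmpl n B₁) (B₂ :: T) := by
        refine POn_of_head ?_ ?_ ?_ ?_
        · simpa [List.flatten_cons] using hperm.2.1
        · intro z
          have := hperm.2.2.1 z
          simpa [List.flatten_cons] using this
        · intro B hB; exact hperm.1 B (List.mem_cons_of_mem _ hB)
        · have hch' := hch
          simp only [List.map_cons] at hch' ⊢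
          exact hch'.tail
      obtain ⟨hstdP, hstdSh, hstdSinv, hstdRT⟩ := std_spec hcard hPOn
      have h1 : (tr a x B₁).getLastD 0 = x := by
        rw [tr_getLastD _ _ hB₁ne, ← haa, Equiv.swap_apply_left]
      have h2 : minL (tr a x B₁) = a := by
        have htne : tr a x B₁ ≠ [] := tr_ne_nil hB₁ne
        have hm := minL_spec htne
        refine le_antisymm (hm.2 a ((mem_tr B₁ haB hx).2 haB)) ?_
        exact hamin _ ((mem_tr B₁ haB hx).1 hm.1)
      refine ⟨⟨?_, ?_, ?_, ?_, ?_⟩, ?_, ?_⟩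
      · exact (isPermutition_iff_POn _ _).2 hstdP
      · rw [hstdSh]; simp [shape, hlen2, hshT]
      · simp [hlen1]
      · exact tr_nodup hB₁nd
      · intro z hz
        exact hB₁I z ((mem_tr B₁ haB hx).1 hz)
      · -- G round trip
        simp only [G]
        have hCeq : Cmpl n (tr a x B₁) = Cmpl n B₁ := Cmpl_congr (tr_toFinset B₁ haB hx)
        rw [hCeq, hstdRT]
        dsimp only [List.headD_cons, List.tail_cons]
        erw [if_neg ?hne]
        case hne =>
          apply List.ne_nil_of_mem (a := a)
          rw [List.mem_filter]
          exact ⟨(mem_tr B₁ haB hx).2 haB, decide_eq_true hal⟩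
        rw [h1, h2, tr_tr]
      · -- sinv relation
        show sinv (B₁ :: B₂ :: T) = sinv (stdL (Cmpl n B₁) (B₂ :: T)) + (i₁ - 1)
        rw [sinv_cons B₁, ← haa, hstdSinv]
        have hcnt : B₁.countP (fun z => decide (a < z)) = i₁ - 1 := by
          have hlen : B₁.length = _ := List.length_eq_countP_add_countP (fun z => decide (a < z))
          have hone : B₁.countP (fun z => decide ¬(decide (a < z)) = true) = 1 := by
            refine countP_eq_one B₁ hB₁nd _ a haB (by simp) ?_
            intro y hy hpy
            simp only [decide_eq_true_eq, decide_eq_false_iff_not] at hpy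
            have := hamin y hy
            omega
          rw [hlen1] at hlen
          omega
        omega
    · -- swap with the predecessor of a : stay in E₁
      rw [if_neg hP]
      set b := maxL (B₁.filter (fun y => decide (y < a))) with hbd
      have hbP : b ∈ B₁.filter (fun y => decide (y < a)) := (maxL_spec hP).1
      have hbmax : ∀ z ∈ B₁.filter (fun y => decide (y < a)), z ≤ b := (maxL_spec hP).2
      have hbB : b ∈ B₁ := (List.mem_filter.1 hbP).1
      have hba : b < a := by simpa using (List.mem_filter.1 hbP).2
      have hlast' : (tr a b B₁).getLastD 0 = b := by
        rw [tr_getLastD _ _ hB₁ne, ← haa, Equiv.swap_apply_left]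
      have hperm' : IsPermutition n (tr a b B₁ :: B₂ :: T) := by
        refine isPermutition_congr hperm ?_ ?_ ?_
        · intro B hB
          rcases List.mem_cons.1 hB with rfl | hB'
          · exact tr_ne_nil hB₁ne
          · exact hperm.1 B (List.mem_cons_of_mem _ hB')
        · simp only [List.flatten_cons]
          exact ((tr_perm hB₁nd haB hbB).append_right _)
        · simp only [List.map_cons, hlast']
          rw [List.Chain', List.isChain_cons_cons]
          refine ⟨lt_trans hba hal, ?_⟩
          have hch' := hch
          simp only [List.map_cons] at hch' ⊢
          exact hch'.tail
      refine ⟨⟨hperm', ?_, ?_⟩, ?_, ?_⟩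
      · simp [shape, hlen1, hlen2, hshT]
      · simp only [List.headD_cons]
        exact List.mem_map_of_mem hx
      · -- G round trip
        simp only [G]
        rw [hlast']
        have haQ : a ∈ (tr a b B₁).filter
            (fun s => decide (b < s ∧ s < B₂.getLastD 0)) := by
          rw [List.mem_filter]
          exact ⟨(mem_tr B₁ haB hbB).2 haB, by simp only [decide_eq_true_eq]; exact ⟨hba, hal⟩⟩
        rw [if_neg (List.ne_nil_of_mem haQ)]
        have hminQ : minL ((tr a b B₁).filter
            (fun s => decide (b < s ∧ s < B₂.getLastD 0))) = a := by
          have h1 := minL_spec (List.ne_nil_of_mem haQ)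
          refine le_antisymm (h1.2 a haQ) ?_
          obtain ⟨hz1, hz2⟩ := (mem_filter_tr haB hbB).1 h1.1
          simp only [decide_eq_true_eq] at hz2
          by_contra h'
          have hzP : minL ((tr a b B₁).filter
              (fun s => decide (b < s ∧ s < B₂.getLastD 0))) ∈
              B₁.filter (fun y => decide (y < a)) := by
            rw [List.mem_filter]
            exact ⟨hz1, by simp only [decide_eq_true_eq]; omega⟩
          have := hbmax _ hzP
          omega
        rw [hminQ, tr_comm b a, tr_tr, Equiv.swap_comm b a, Equiv.swap_apply_self]
      · -- sinv relation
        show sinv (tr a b B₁ :: B₂ :: T) = sinv (B₁ :: B₂ :: T) + 1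
        rw [sinv_cons (tr a b B₁), sinv_cons B₁, hlast', ← haa]
        rw [(tr_perm hB₁nd haB hbB).countP_eq]
        have hsplit : B₁.countP (fun z => decide (b < z)) =
            B₁.countP (fun z => decide (a < z)) +
              B₁.countP (fun z => decide (b < z ∧ z ≤ a)) := by
          refine countP_split B₁ _ _ _ ?_ ?_
          · intro y hy
            rw [Bool.eq_iff_iff]
            simp only [Bool.or_eq_true, decide_eq_true_eq]
            omega
          · intro y hy
            simp only [decide_eq_true_eq]
            omega
        have hone : B₁.countP (fun z => decide (b < z ∧ z ≤ a)) = 1 := by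
          refine countP_eq_one B₁ hB₁nd _ a haB (by simp [hba]) ?_
          intro y hy hpy
          simp only [decide_eq_true_eq] at hpy
          by_contra h'
          have hyP : y ∈ B₁.filter (fun z => decide (z < a)) := by
            rw [List.mem_filter]
            exact ⟨hy, by simp; omega⟩
          have := hbmax _ hyP
          omega
        omega
  · obtain ⟨hperm, hshape⟩ := he
    rcases L with _ | ⟨B, T⟩
    · simp [shape] at hshape
    simp only [shape, List.map_cons, List.cons.injEq] at hshape
    obtain ⟨hlenB, hshT⟩ := hshape
    have hBne : B ≠ [] := hperm.1 _ (by simp)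
    have hch := hperm.2.2.2
    have hBnd : B.Nodup := by
      have := hperm.2.1
      simp only [List.flatten_cons] at this
      exact this.of_append_left
    have hwlen : (B.take i₁).length = i₁ := by
      rw [List.length_take, hlenB]; omega
    have hwne : B.take i₁ ≠ [] := by
      intro h'; rw [h'] at hwlen; simp at hwlen; omega
    have hB'len : (B.drop i₁).length = i₂ := by
      rw [List.length_drop, hlenB]; omega
    have hB'ne : B.drop i₁ ≠ [] := by
      intro h'; rw [h'] at hB'len; simp at hB'len; omega
    have hsplit : B.take i₁ ++ B.drop i₁ = B := List.take_append_drop i₁ B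
    have hlastB : B.getLastD 0 = (B.drop i₁).getLastD 0 := by
      conv_lhs => rw [← hsplit]
      exact getLastD_append hB'ne
    have hwnd : (B.take i₁).Nodup := by
      rw [← hsplit] at hBnd; exact hBnd.of_append_left
    have hBI : ∀ z ∈ B, 1 ≤ z ∧ z ≤ n := fun z hz =>
      (hperm.2.2.1 z).1 (List.mem_flatten.2 ⟨B, by simp, hz⟩)
    have hwI : ∀ z ∈ B.take i₁, 1 ≤ z ∧ z ≤ n := fun z hz =>
      hBI z (by rw [← hsplit]; exact List.mem_append_left _ hz)
    have hdisjwB' : ∀ z ∈ B.take i₁, z ∉ B.drop i₁ := by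
      rw [← hsplit] at hBnd
      exact fun z hz => List.disjoint_of_nodup_append hBnd hz
    have hℓB' : (B.drop i₁).getLastD 0 ∈ B.drop i₁ := getLastD_mem hB'ne
    have hPOn : POn (Cmpl n (B.take i₁)) (B.drop i₁ :: T) := by
      refine POn_of_head ?_ ?_ ?_ ?_
      · have hthis := hperm.2.1
        simp only [List.flatten_cons] at hthis ⊢
        rw [← List.append_assoc, hsplit]
        exact hthis
      · intro z
        have hthis := hperm.2.2.1 z
        simp only [List.flatten_cons] at hthis ⊢
        rw [← List.append_assoc, hsplit]
        exact hthis
      · intro B'' hB''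
        rcases List.mem_cons.1 hB'' with rfl | h'
        · exact hB'ne
        · exact hperm.1 _ (List.mem_cons_of_mem _ h')
      · have hch' := hch
        simp only [List.map_cons] at hch' ⊢
        rw [← hlastB]
        exact hch'
    simp only [F]
    set w := B.take i₁ with hwd
    set B' := B.drop i₁ with hB'd
    by_cases hs : w.filter (fun y => decide (y < B.getLastD 0)) = []
    · rw [if_pos hs]
      have hcard : (Cmpl n w).card = n - i₁ := by rw [Cmpl_card hwnd hwI, hwlen]
      obtain ⟨hstdP, hstdSh, hstdSinv, hstdRT⟩ := std_spec hcard hPOn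
      refine ⟨⟨?_, ?_, ?_, ?_, ?_⟩, ?_, ?_⟩
      · exact (isPermutition_iff_POn _ _).2 hstdP
      · rw [hstdSh]; simp [shape, hB'len, hshT]
      · exact hwlen
      · exact hwnd
      · exact hwI
      · simp only [G]
        rw [hstdRT]
        simp only [List.headD_cons, List.tail_cons]
        simp only [← hlastB]
        rw [if_pos hs, hsplit]
      · show sinv (B :: T) = sinv (stdL (Cmpl n w) (B' :: T)) + i₁
        rw [hstdSinv, sinv_cons B, sinv_cons B']
        have hcntw : w.countP (fun z => decide (B.getLastD 0 < z)) = i₁ := by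
          rw [← hwlen, List.countP_eq_length]
          intro z hz
          simp only [decide_eq_true_eq]
          have hns : ¬ z < B.getLastD 0 := by
            simpa using (List.filter_eq_nil_iff.1 hs) z hz
          have h2 : z ≠ B.getLastD 0 := fun h'' =>
            hdisjwB' z hz (by rw [h'', hlastB]; exact hℓB')
          omega
        have hfull : B.countP (fun z => decide (B.getLastD 0 < z)) =
            w.countP (fun z => decide (B.getLastD 0 < z)) +
              B'.countP (fun z => decide (B.getLastD 0 < z)) := by
          rw [← hsplit, List.countP_append]
        rw [← hlastB]
        omega
    · rw [if_neg hs]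
      have hσs := (maxL_spec hs).1
      have hσmax := (maxL_spec hs).2
      set σ := maxL (w.filter (fun y => decide (y < B.getLastD 0))) with hσd
      have hσw : σ ∈ w := (List.mem_filter.1 hσs).1
      have hσℓ : σ < B.getLastD 0 := by simpa using (List.mem_filter.1 hσs).2
      have hxw : w.getLastD 0 ∈ w := getLastD_mem hwne
      have hlast' : (tr σ (w.getLastD 0) w).getLastD 0 = σ := by
        rw [tr_getLastD _ _ hwne, Equiv.swap_apply_right]
      refine ⟨⟨?_, ?_, ?_⟩, ?_, ?_⟩
      · refine isPermutition_congr hperm ?_ ?_ ?_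
        · intro B'' hB''
          rcases List.mem_cons.1 hB'' with rfl | h'
          · exact tr_ne_nil hwne
          rcases List.mem_cons.1 h' with rfl | h''
          · exact hB'ne
          · exact hperm.1 _ (List.mem_cons_of_mem _ h'')
        · simp only [List.flatten_cons]
          refine List.Perm.trans ((tr_perm hwnd hσw hxw).append_right _) ?_
          exact List.Perm.of_eq (by rw [← List.append_assoc, hsplit])
        · simp only [List.map_cons, hlast']
          rw [List.Chain', List.isChain_cons_cons]
          constructor
          · rw [← hlastB]; exact hσℓ
          · have hch' := hch
            simp only [List.map_cons] at hch' ⊢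
            rw [← hlastB]
            exact hch'
      · simp [shape, hwlen, hB'len, hshT]
      · simp only [List.headD_cons]
        exact (mem_tr w hσw hxw).2 hxw
      · simp only [G]
        rw [hlast']
        have hQ : (tr σ (w.getLastD 0) w).filter
            (fun s => decide (σ < s ∧ s < B'.getLastD 0)) = [] := by
          rw [List.filter_eq_nil_iff]
          intro z hz
          have hzw := (mem_tr w hσw hxw).1 hz
          simp only [decide_eq_true_eq]
          rintro ⟨hz1, hz2⟩
          have hzs : z ∈ w.filter (fun y => decide (y < B.getLastD 0)) :=
            List.mem_filter.2 ⟨hzw, by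
              simp only [decide_eq_true_eq]; rw [hlastB]; exact hz2⟩
          have := hσmax z hzs
          omega
        rw [if_pos hQ, tr_tr, hsplit]
      · show sinv (tr σ (w.getLastD 0) w :: B' :: T) = sinv (B :: T)
        rw [sinv_cons (tr σ (w.getLastD 0) w), sinv_cons B, sinv_cons B', hlast']
        rw [(tr_perm hwnd hσw hxw).countP_eq]
        have hw' : w.countP (fun z => decide (σ < z)) =
            w.countP (fun z => decide (B.getLastD 0 < z)) := by
          apply List.countP_congr
          intro z hz
          simp only [decide_eq_true_eq]
          constructor
          · intro h'
            have hzne : z ≠ B.getLastD 0 := fun h'' =>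
              hdisjwB' z hz (by rw [h'', hlastB]; exact hℓB')
            by_contra h''
            have hzs : z ∈ w.filter (fun y => decide (y < B.getLastD 0)) :=
              List.mem_filter.2 ⟨hz, by simp only [decide_eq_true_eq]; omega⟩
            have := hσmax z hzs
            omega
          · intro h'; omega
        have hfull : B.countP (fun z => decide (B.getLastD 0 < z)) =
            w.countP (fun z => decide (B.getLastD 0 < z)) +
              B'.countP (fun z => decide (B.getLastD 0 < z)) := by
          rw [← hsplit, List.countP_append]
        rw [← hlastB]
        omega

lemma G_spec (n i₁ i₂ : ℕ) (J : List ℕ) (h₁ : 0 < i₁) (h₂ : 0 < i₂)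
    (y : (List (List ℕ) × ℕ) ⊕ (List (List ℕ) × List ℕ))
    (hy : Sum.elim (P1 n i₁ i₂ J) (P3 n i₁ i₂ J) y) :
    Sum.elim (P1 n i₁ i₂ J) (P2 n i₁ i₂ J) (G n i₁ y) ∧ F n i₁ (G n i₁ y) = y := by
  rcases y with ⟨L, y₀⟩ | ⟨π, w⟩
  · obtain ⟨hperm, hshape, hy⟩ := hy
    rcases L with _ | ⟨B₁, M⟩
    · simp [shape] at hshape
    rcases M with _ | ⟨B₂, T⟩
    · simp [shape] at hshape
    simp only [shape, List.map_cons, List.cons.injEq] at hshape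
    obtain ⟨hlen1, hlen2, hshT⟩ := hshape
    simp only [List.headD_cons] at hy
    have hB₁ne : B₁ ≠ [] := hperm.1 _ (by simp)
    have hB₂ne : B₂ ≠ [] := hperm.1 _ (by simp)
    have hch := hperm.2.2.2
    have hal : B₁.getLastD 0 < B₂.getLastD 0 := chain'_first hch
    have hB₁nd : B₁.Nodup := by
      have := hperm.2.1
      simp only [List.flatten_cons] at this
      exact this.of_append_left
    have haB : B₁.getLastD 0 ∈ B₁ := getLastD_mem hB₁ne
    simp only [G]
    set a := B₁.getLastD 0 with haa
    by_cases hQ : B₁.filter (fun s => decide (a < s ∧ s < B₂.getLastD 0)) = []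
    · -- a is the largest letter of B₁ below the next last : merge into E₂
      rw [if_pos hQ]
      have hQ' : ∀ z ∈ B₁, ¬(a < z ∧ z < B₂.getLastD 0) := by
        intro z hz
        simpa using (List.filter_eq_nil_iff.1 hQ) z hz
      have htrI : ∀ z, z ∈ tr a y₀ B₁ ↔ z ∈ B₁ := fun z => mem_tr B₁ haB hy
      have hwB₂ne : tr a y₀ B₁ ++ B₂ ≠ [] := by
        simp [tr_ne_nil hB₁ne]
      have hlast2 : (tr a y₀ B₁ ++ B₂).getLastD 0 = B₂.getLastD 0 :=
        getLastD_append hB₂ne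
      have hpermM : IsPermutition n ((tr a y₀ B₁ ++ B₂) :: T) := by
        refine isPermutition_congr hperm ?_ ?_ ?_
        · intro B hB
          rcases List.mem_cons.1 hB with rfl | h'
          · exact hwB₂ne
          · exact hperm.1 _ (List.mem_cons_of_mem _ (List.mem_cons_of_mem _ h'))
        · simp only [List.flatten_cons]
          rw [List.append_assoc]
          exact ((tr_perm hB₁nd haB hy).append_right _)
        · simp only [List.map_cons, hlast2]
          have hch' := hch
          simp only [List.map_cons] at hch'
          exact hch'.tail
      refine ⟨⟨hpermM, ?_⟩, ?_⟩
      · simp [shape, hlen1, hlen2, hshT]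
      · -- F round trip
        simp only [F]
        have htake : (tr a y₀ B₁ ++ B₂).take i₁ = tr a y₀ B₁ :=
          List.take_left' (by simp [hlen1])
        have hdrop : (tr a y₀ B₁ ++ B₂).drop i₁ = B₂ :=
          List.drop_left' (by simp [hlen1])
        rw [htake, hdrop, hlast2]
        have has : a ∈ (tr a y₀ B₁).filter (fun y => decide (y < B₂.getLastD 0)) :=
          List.mem_filter.2 ⟨(htrI a).2 haB, by simp only [decide_eq_true_eq]; exact hal⟩
        rw [if_neg (List.ne_nil_of_mem has)]
        have hmax : maxL ((tr a y₀ B₁).filter (fun y => decide (y < B₂.getLastD 0))) = a := by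
          refine le_antisymm ?_ ((maxL_spec (List.ne_nil_of_mem has)).2 a has)
          have hm := (maxL_spec (List.ne_nil_of_mem has)).1
          obtain ⟨hz1, hz2⟩ := List.mem_filter.1 hm
          rw [htrI] at hz1
          simp only [decide_eq_true_eq] at hz2
          by_contra h'
          exact (hQ' _ hz1) ⟨by omega, hz2⟩
        have hlasttr : (tr a y₀ B₁).getLastD 0 = y₀ := by
          rw [tr_getLastD _ _ hB₁ne, ← haa, Equiv.swap_apply_left]
        rw [hmax, hlasttr, tr_tr]
  -- b exists: swap back towards a
    · rw [if_neg hQ]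
      have hbQ := (minL_spec hQ).1
      have hbmin := (minL_spec hQ).2
      set b := minL (B₁.filter (fun s => decide (a < s ∧ s < B₂.getLastD 0))) with hbd
      have hbB : b ∈ B₁ := (List.mem_filter.1 hbQ).1
      have hbab : a < b ∧ b < B₂.getLastD 0 := by
        simpa using (List.mem_filter.1 hbQ).2
      have hlast' : (tr a b B₁).getLastD 0 = b := by
        rw [tr_getLastD _ _ hB₁ne, ← haa, Equiv.swap_apply_left]
      have hperm' : IsPermutition n (tr a b B₁ :: B₂ :: T) := by
        refine isPermutition_congr hperm ?_ ?_ ?_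
        · intro B hB
          rcases List.mem_cons.1 hB with rfl | hB'
          · exact tr_ne_nil hB₁ne
          · exact hperm.1 B (List.mem_cons_of_mem _ hB')
        · simp only [List.flatten_cons]
          exact ((tr_perm hB₁nd haB hbB).append_right _)
        · simp only [List.map_cons, hlast']
          rw [List.Chain', List.isChain_cons_cons]
          refine ⟨hbab.2, ?_⟩
          have hch' := hch
          simp only [List.map_cons] at hch' ⊢
          exact hch'.tail
      refine ⟨⟨hperm', ?_, ?_⟩, ?_⟩
      · simp [shape, hlen1, hlen2, hshT]
      · simp only [List.headD_cons]
        exact List.mem_map_of_mem hy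
      · -- F round trip
        simp only [F]
        rw [hlast']
        have haP : a ∈ (tr a b B₁).filter (fun z => decide (z < b)) :=
          List.mem_filter.2 ⟨(mem_tr B₁ haB hbB).2 haB,
            by simp only [decide_eq_true_eq]; exact hbab.1⟩
        rw [if_neg (List.ne_nil_of_mem haP)]
        have hmax : maxL ((tr a b B₁).filter (fun z => decide (z < b))) = a := by
          refine le_antisymm ?_ ((maxL_spec (List.ne_nil_of_mem haP)).2 a haP)
          have hm := (maxL_spec (List.ne_nil_of_mem haP)).1
          obtain ⟨hz1, hz2⟩ := (mem_filter_tr haB hbB).1 hm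
          simp only [decide_eq_true_eq] at hz2
          by_contra h'
          have hzQ : maxL ((tr a b B₁).filter (fun z => decide (z < b))) ∈
              B₁.filter (fun s => decide (a < s ∧ s < B₂.getLastD 0)) :=
            List.mem_filter.2 ⟨hz1, by simp only [decide_eq_true_eq]; omega⟩
          have := hbmin _ hzQ
          omega
        rw [hmax, tr_comm b a, tr_tr, Equiv.swap_comm b a, Equiv.swap_apply_self]
  · obtain ⟨hπperm, hshπ, hwlen, hwnd, hwI'⟩ := hy
    have hwI : ∀ z ∈ w, 1 ≤ z ∧ z ≤ n := hwI'
    have hwne : w ≠ [] := by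
      intro h'; rw [h'] at hwlen; simp at hwlen; omega
    have hcard : (Cmpl n w).card = n - i₁ := by rw [Cmpl_card hwnd hwI, hwlen]
    obtain ⟨hPOn, hRsh, hRsinv, hRT⟩ :=
      unstd_spec hcard ((isPermutition_iff_POn _ _).1 hπperm)
    rcases hR : unstdL (Cmpl n w) π with _ | ⟨B'', T''⟩
    · rw [hR] at hRsh
      rw [hshπ] at hRsh
      simp [shape] at hRsh
    rw [hR] at hPOn hRsh hRsinv hRT
    rw [hshπ] at hRsh
    simp only [shape, List.map_cons, List.cons.injEq] at hRsh
    obtain ⟨hB''len, hshT''⟩ := hRsh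
    have hB''ne : B'' ≠ [] := hPOn.1 _ (by simp)
    have hmerge := merge_of_POn hwnd hwI hPOn
    have hxw : w.getLastD 0 ∈ w := getLastD_mem hwne
    simp only [G]
    rw [hR]
    dsimp only [List.headD_cons, List.tail_cons]
    by_cases hs : w.filter (fun y => decide (y < B''.getLastD 0)) = []
    · erw [if_pos hs]
      have hlast2 : (w ++ B'').getLastD 0 = B''.getLastD 0 := getLastD_append hB''ne
      refine ⟨⟨⟨?_, ?_, ?_, ?_⟩, ?_⟩, ?_⟩
      · intro B hB
        rcases List.mem_cons.1 hB with rfl | h'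
        · simp [hwne]
        · exact hPOn.1 _ (List.mem_cons_of_mem _ h')
      · simp only [List.flatten_cons]
        rw [List.append_assoc]
        have := hmerge.1
        simpa [List.flatten_cons] using this
      · intro z
        simp only [List.flatten_cons]
        rw [List.append_assoc]
        have := hmerge.2 z
        simpa [List.flatten_cons] using this
      · simp only [List.map_cons, hlast2]
        have hch' := hPOn.2.2.2
        simpa [List.map_cons] using hch'
      · simp [shape, hwlen, hB''len, hshT'']
      · -- F round trip
        simp only [F]
        have htake : (w ++ B'').take i₁ = w := List.take_left' hwlen
        have hdrop : (w ++ B'').drop i₁ = B'' := List.drop_left' hwlen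
        rw [htake, hdrop, hlast2, if_pos hs, hRT]
    · erw [if_neg hs]
      have hm₀w : minL w ∈ w := (minL_spec hwne).1
      have hm₀min := (minL_spec hwne).2
      have hm₀ℓ : minL w < B''.getLastD 0 := by
        obtain ⟨z, hz⟩ := List.exists_mem_of_ne_nil _ hs
        obtain ⟨hz1, hz2⟩ := List.mem_filter.1 hz
        simp only [decide_eq_true_eq] at hz2
        exact lt_of_le_of_lt (hm₀min z hz1) hz2
      have hlast' : (tr (minL w) (w.getLastD 0) w).getLastD 0 = minL w := by
        rw [tr_getLastD _ _ hwne, Equiv.swap_apply_right]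
      have hp : (tr (minL w) (w.getLastD 0) w :: B'' :: T'').flatten ~
          w ++ (B'' :: T'').flatten := by
        simp only [List.flatten_cons]
        exact ((tr_perm hwnd hm₀w hxw).append_right _)
      refine ⟨⟨⟨?_, ?_, ?_, ?_⟩, ?_, ?_⟩, ?_⟩
      · intro B hB
        rcases List.mem_cons.1 hB with rfl | h'
        · exact tr_ne_nil hwne
        rcases List.mem_cons.1 h' with rfl | h''
        · exact hB''ne
        · exact hPOn.1 _ (List.mem_cons_of_mem _ h'')
      · exact hp.symm.nodup hmerge.1
      · intro z
        exact (hp.mem_iff).trans (hmerge.2 z)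
      · simp only [List.map_cons, hlast']
        rw [List.Chain', List.isChain_cons_cons]
        refine ⟨hm₀ℓ, ?_⟩
        have hch' := hPOn.2.2.2
        simpa [List.map_cons, List.Chain'] using hch'
      · simp [shape, hwlen, hB''len, hshT'']
      · simp only [List.headD_cons]
        exact (mem_tr w hm₀w hxw).2 hxw
      · -- F round trip
        simp only [F]
        rw [hlast']
        have hP : (tr (minL w) (w.getLastD 0) w).filter
            (fun z => decide (z < minL w)) = [] := by
          rw [List.filter_eq_nil_iff]
          intro z hz
          have hzw := (mem_tr w hm₀w hxw).1 hz
          simp only [decide_eq_true_eq]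
          have := hm₀min z hzw
          omega
        rw [if_pos hP, tr_tr]
        have hCeq : Cmpl n (tr (minL w) (w.getLastD 0) w) = Cmpl n w :=
          Cmpl_congr (tr_toFinset w hm₀w hxw)
        rw [hCeq, hRT]

/-! ### assembly -/

section assembly
variable {α β : Type*} {p : α → Prop} {q : β → Prop}

def liftS (p : α → Prop) (q : β → Prop) :
    ∀ x : α ⊕ β, Sum.elim p q x → ({a // p a} ⊕ {b // q b})
  | Sum.inl a, h => Sum.inl ⟨a, h⟩
  | Sum.inr b, h => Sum.inr ⟨b, h⟩

def lowS : ({a // p a} ⊕ {b // q b}) → α ⊕ β :=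
  Sum.elim (fun a => Sum.inl a.1) (fun b => Sum.inr b.1)

lemma lowS_elim (e : {a // p a} ⊕ {b // q b}) : Sum.elim p q (lowS e) := by
  rcases e with a | b
  · exact a.2
  · exact b.2

lemma lowS_liftS (x : α ⊕ β) (h : Sum.elim p q x) : lowS (liftS p q x h) = x := by
  rcases x with a | b <;> rfl

lemma liftS_eq (x : α ⊕ β) (h : Sum.elim p q x) (e : {a // p a} ⊕ {b // q b})
    (hx : x = lowS e) : liftS p q x h = e := by
  subst hx
  rcases e with a | b <;> rfl

lemma match_key (n i₁ i₂ : ℕ) (J : List ℕ)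
    (e : {p : List (List ℕ) × ℕ // P1 n i₁ i₂ J p} ⊕ {L : List (List ℕ) // P2 n i₁ i₂ J L})
    (y : (List (List ℕ) × ℕ) ⊕ (List (List ℕ) × List ℕ))
    (h : Sum.elim (P1 n i₁ i₂ J) (P3 n i₁ i₂ J) y) :
    Rel i₁ (lowS e) y →
    (match e, liftS (P1 n i₁ i₂ J) (P3 n i₁ i₂ J) y h with
      | Sum.inl τ, Sum.inl π => sinv π.1.1 = sinv τ.1.1 + 1
      | Sum.inl τ, Sum.inr π => sinv τ.1.1 = sinv π.1.1 + (i₁ - 1)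
      | Sum.inr τ, Sum.inl π => sinv π.1.1 = sinv τ.1
      | Sum.inr τ, Sum.inr π => sinv τ.1 = sinv π.1.1 + i₁) := by
  intro hrel
  rcases e with τ | τ <;> rcases y with q | q <;>
    simpa [liftS, lowS, Rel] using hrel

end assembly
end SinvBij

open SinvBij

/-- the bijection `φ : E₁ ⊔ E₂ ≃ E₁ ⊔ E₃` underlying the proof of the
combinatorial interpretation, with its behaviour on the statistic `sinv`.
Here `E₁` is the set of pairs `(τ, x)` with `c(τ) = I` and `x` a letter of the first
block of `τ` (the block with smallest last letter, i.e. the head in the canonical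
representation); `E₂` is the set of permutitions of shape `I¹ = (i₁+i₂, i₃, …, i_r)`;
`E₃` is the set of pairs `(π, w)` with `c(π) = (i₂, …, i_r)`, `π` of size `n − i₁`,
and `w` a word of length `i₁` with distinct letters in `{1, …, n}`.
The `sinv` relations are stated additively to avoid truncated subtraction:
(a) `sinv π = sinv τ + 1`; (b) `sinv τ = sinv π + (i₁ − 1)`, i.e. `sinv π = sinv τ − (i₁ − 1)`;
(c) `sinv π = sinv τ`; (d) `sinv τ = sinv π + i₁`, i.e. `sinv π = sinv τ − i₁`. -/
theorem exists_sinv_bijection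
    (n i₁ i₂ : ℕ) (J : List ℕ) (h₁ : 0 < i₁) (h₂ : 0 < i₂) (hJ : ∀ j ∈ J, 0 < j)
    (hsum : (i₁ :: i₂ :: J).sum = n) :
    ∃ φ :
      ({p : List (List ℕ) × ℕ //
          IsPermutition n p.1 ∧ shape p.1 = i₁ :: i₂ :: J ∧ p.2 ∈ p.1.headD []} ⊕
        {L : List (List ℕ) // IsPermutition n L ∧ shape L = (i₁ + i₂) :: J}) ≃
      ({p : List (List ℕ) × ℕ //
          IsPermutition n p.1 ∧ shape p.1 = i₁ :: i₂ :: J ∧ p.2 ∈ p.1.headD []} ⊕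
        {p : List (List ℕ) × List ℕ //
          IsPermutition (n - i₁) p.1 ∧ shape p.1 = i₂ :: J ∧
            p.2.length = i₁ ∧ p.2.Nodup ∧ ∀ x ∈ p.2, 1 ≤ x ∧ x ≤ n}),
      ∀ e, (match e, φ e with
        | Sum.inl τ, Sum.inl π => sinv π.1.1 = sinv τ.1.1 + 1
        | Sum.inl τ, Sum.inr π => sinv τ.1.1 = sinv π.1.1 + (i₁ - 1)
        | Sum.inr τ, Sum.inl π => sinv π.1.1 = sinv τ.1
        | Sum.inr τ, Sum.inr π => sinv τ.1 = sinv π.1.1 + i₁) := by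
  classical
  refine ⟨Equiv.mk
    (fun e => liftS (P1 n i₁ i₂ J) (P3 n i₁ i₂ J) (F n i₁ (lowS e))
      ((F_spec n i₁ i₂ J h₁ h₂ _ (lowS_elim e)).1))
    (fun y => liftS (P1 n i₁ i₂ J) (P2 n i₁ i₂ J) (G n i₁ (lowS y))
      ((G_spec n i₁ i₂ J h₁ h₂ _ (lowS_elim y)).1))
    (fun e => ?_) (fun y => ?_), ?_⟩
  · apply liftS_eq
    beta_reduce
    rw [lowS_liftS, (F_spec n i₁ i₂ J h₁ h₂ _ (lowS_elim e)).2.1]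
  · apply liftS_eq
    beta_reduce
    rw [lowS_liftS, (G_spec n i₁ i₂ J h₁ h₂ _ (lowS_elim y)).2]
  · intro e
    have hrel := (F_spec n i₁ i₂ J h₁ h₂ (lowS e) (lowS_elim e)).2.2
    simp only [Equiv.coe_fn_mk]
    exact match_key n i₁ i₂ J e _ _ hrel
end

section
/- With S_n and T_n(q) defined in the free ℝ-algebra F as in the context, for every n ≥ 0 and every real number q one has T_n(q) = Σ_I g_I(q) · Ψ^I, where the sum ranges over all compositions I = (i_1, …, i_r) of n and Ψ^I = Ψ_{i_1} Ψ_{i_2} ⋯ Ψ_{i_r}. That is, the coefficient of Ψ^I in the degree-n component S_n((1−q)A) of the (1−q)-transform is the composition polynomial g_I(q). -/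
/-- The noncommutative complete symmetric functions `S_n` in the free `ℝ`-algebra on the
noncommutative power sums `Ψ_1, Ψ_2, …` (the generator `k` of `FreeAlgebra ℝ ℕ`
standing for `Ψ_k`), defined by `S_0 = 1` and `S_n = (1/n) Σ_{k=1}^n S_{n−k} Ψ_k`. -/
noncomputable def S : ℕ → FreeAlgebra ℝ ℕ
  | 0 => 1
  | n + 1 =>
      ((n + 1 : ℝ))⁻¹ • ∑ k ∈ Finset.range (n + 1), S (n - k) * FreeAlgebra.ι ℝ (k + 1)
  decreasing_by exact Nat.lt_succ_of_le (Nat.sub_le n k)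

/-- `T_n(q)`, the degree-`n` component of `σ_q^{-1} σ_1`, i.e. of `S_n((1−q)A)`:
determined by `T_0(q) = 1` and the recursion `S_n = Σ_{k=0}^n q^k S_k T_{n−k}(q)`,
here solved for `T_n(q)`. -/
noncomputable def T (q : ℝ) : ℕ → FreeAlgebra ℝ ℕ
  | 0 => 1
  | n + 1 =>
      S (n + 1) - ∑ k ∈ Finset.range (n + 1), q ^ (k + 1) • (S (k + 1) * T q (n - k))
  decreasing_by exact Nat.lt_succ_of_le (Nat.sub_le n k)

/-- `Ψ^I = Ψ_{i_1} Ψ_{i_2} ⋯ Ψ_{i_r}`. -/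
noncomputable def psi (I : List ℕ) : FreeAlgebra ℝ ℕ :=
  (I.map (FreeAlgebra.ι ℝ)).prod

lemma G_nil (q t : ℝ) : G q [] t = 1 := rfl
lemma G_cons (q t : ℝ) (i : ℕ) (J : List ℕ) :
    G q (i::J) t = ∫ s in q..t, s ^ (i - 1) * G q J s := rfl

lemma G_cont (q : ℝ) (w : List ℕ) : Continuous (G q w) := by
  induction w with
  | nil => exact continuous_const
  | cons i J ih =>
    have h : Continuous fun s : ℝ => s ^ (i - 1) * G q J s := (continuous_pow _).mul ih
    exact intervalIntegral.continuous_primitive (fun a b => h.intervalIntegrable a b) q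

lemma G_intble (q c a b : ℝ) (m : ℕ) (w : List ℕ) :
    IntervalIntegrable (fun s => s ^ m * (G q w s * c)) MeasureTheory.volume a b :=
  (((continuous_pow m).mul ((G_cont q w).mul continuous_const))).intervalIntegrable a b

lemma G_intble' (q a b : ℝ) (m : ℕ) (w : List ℕ) :
    IntervalIntegrable (fun s => s ^ m * G q w s) MeasureTheory.volume a b :=
  ((continuous_pow m).mul (G_cont q w)).intervalIntegrable a b

lemma G_scale : ∀ (w : List ℕ), (∀ i ∈ w, 0 < i) → ∀ (c t : ℝ),
    G 0 w (c * t) = c ^ w.sum * G 0 w t := by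
  intro w
  induction w with
  | nil => intro _ c t; simp [G_nil]
  | cons i J ih =>
    intro hw c t
    have hi : 0 < i := hw i (by simp)
    have hJ : ∀ j ∈ J, 0 < j := fun j hj => hw j (by simp [hj])
    rcases eq_or_ne c 0 with rfl | hc
    · rw [zero_mul, G_cons, intervalIntegral.integral_same]
      have : (0:ℝ) ^ (i :: J).sum = 0 := by
        apply zero_pow
        simp only [List.sum_cons]
        omega
      rw [this, zero_mul]
    · have key := intervalIntegral.smul_integral_comp_mul_left
        (a := 0) (b := t) (fun s => s ^ (i - 1) * G 0 J s) c
      rw [mul_zero] at key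
      rw [G_cons, ← key]
      have : (fun x : ℝ => (c * x) ^ (i - 1) * G 0 J (c * x))
          = fun x : ℝ => (c ^ (i - 1) * c ^ J.sum) * (x ^ (i - 1) * G 0 J x) := by
        funext x
        rw [ih hJ c x, mul_pow]
        ring
      rw [this, intervalIntegral.integral_const_mul, smul_eq_mul, G_cons]
      rw [show (i :: J).sum = i + J.sum from rfl]
      have hpow : c * (c ^ (i - 1) * c ^ J.sum) = c ^ (i + J.sum) := by
        rw [pow_add, ← mul_assoc]
        congr 1
        conv_rhs => rw [show i = (i - 1) + 1 by omega]
        rw [pow_succ]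
        ring
      rw [← mul_assoc, hpow]

lemma chen (a b : ℝ) : ∀ (w : List ℕ) (t : ℝ),
    G a w t = ∑ j ∈ Finset.range (w.length + 1), G b (w.take j) t * G a (w.drop j) b := by
  intro w
  induction w with
  | nil => intro t; simp [G_nil]
  | cons i w' ih =>
    intro t
    rw [show (i :: w').length + 1 = (w'.length + 1) + 1 from rfl, Finset.sum_range_succ']
    simp only [List.take_succ_cons, List.drop_succ_cons, List.take_zero, List.drop_zero,
      G_nil, one_mul]
    have hterm : ∀ j, G b (i :: w'.take j) t * G a (w'.drop j) b
        = ∫ s in b..t, s ^ (i - 1) * (G b (w'.take j) s * G a (w'.drop j) b) := by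
      intro j
      rw [G_cons, ← intervalIntegral.integral_mul_const]
      congr 1; funext s; ring
    rw [Finset.sum_congr rfl (fun j _ => hterm j),
      ← intervalIntegral.integral_finset_sum (fun j _ => G_intble b (G a (List.drop j w') b) b t (i - 1) (List.take j w'))]
    have hfun : (fun s : ℝ => ∑ j ∈ Finset.range (w'.length + 1),
        s ^ (i - 1) * (G b (w'.take j) s * G a (w'.drop j) b))
        = fun s : ℝ => s ^ (i - 1) * G a w' s := by
      funext s
      rw [← Finset.mul_sum, ← ih s]
    rw [hfun, add_comm, G_cons a t i w', G_cons a b i w']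
    exact (intervalIntegral.integral_add_adjacent_intervals
      (G_intble' a a b (i-1) w') (G_intble' a b t (i-1) w')).symm

def comps : ℕ → Finset (List ℕ)
  | 0 => {[]}
  | n + 1 => (Finset.range (n + 1)).biUnion fun k => (comps (n - k)).image (· ++ [k + 1])
  decreasing_by exact Nat.lt_succ_of_le (Nat.sub_le n k)

lemma mem_comps : ∀ (n : ℕ) (I : List ℕ),
    I ∈ comps n ↔ (∀ i ∈ I, 0 < i) ∧ I.sum = n := by
  intro n
  induction n using Nat.strong_induction_on with
  | _ n ih =>
    match n with
    | 0 =>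
      intro I
      rw [comps]
      simp only [Finset.mem_singleton]
      constructor
      · rintro rfl; simp
      · rintro ⟨hpos, hsum⟩
        cases I with
        | nil => rfl
        | cons i J =>
          exfalso
          have := hpos i (by simp)
          simp only [List.sum_cons] at hsum
          omega
    | n + 1 =>
      intro I
      rw [comps]
      simp only [Finset.mem_biUnion, Finset.mem_range, Finset.mem_image]
      constructor
      · rintro ⟨k, hk, J, hJ, rfl⟩
        obtain ⟨hpos, hsum⟩ := (ih (n - k) (by omega) J).mp hJ
        constructor
        · intro i hi
          rcases List.mem_append.mp hi with h | h
          · exact hpos i h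
          · simp only [List.mem_singleton] at h; omega
        · rw [List.sum_append]
          simp only [List.sum_cons, List.sum_nil]
          omega
      · rintro ⟨hpos, hsum⟩
        have hne : I ≠ [] := by
          rintro rfl
          simp at hsum
        set m := I.getLast hne with hm
        have hmpos : 0 < m := hpos m (List.getLast_mem hne)
        have hIsplit : I.dropLast ++ [m] = I := List.dropLast_append_getLast hne
        have hsum' : I.dropLast.sum + m = n + 1 := by
          rw [← hsum, ← hIsplit]
          simp [List.sum_append]
        have hmle : m ≤ n + 1 := by omega
        refine ⟨m - 1, by omega, I.dropLast, ?_, ?_⟩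
        · rw [ih (n - (m - 1)) (by omega)]
          refine ⟨fun i hi => hpos i (List.dropLast_subset I hi), by omega⟩
        · rw [show m - 1 + 1 = m by omega, hIsplit]

lemma sum_comps_succ {M : Type*} [AddCommMonoid M] (n : ℕ) (f : List ℕ → M) :
    ∑ I ∈ comps (n + 1), f I
      = ∑ k ∈ Finset.range (n + 1), ∑ J ∈ comps (n - k), f (J ++ [k + 1]) := by
  rw [comps, Finset.sum_biUnion]
  · refine Finset.sum_congr rfl fun k _ => ?_
    exact Finset.sum_image fun J _ J' _ h => List.append_left_injective _ h
  · intro k1 _ k2 _ hne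
    simp only [Function.onFun, Finset.disjoint_left]
    intro I hI1 hI2
    simp only [Finset.mem_image] at hI1 hI2
    obtain ⟨J1, _, h1⟩ := hI1
    obtain ⟨J2, _, h2⟩ := hI2
    apply hne
    have h3 := congrArg List.getLast? (h1.trans h2.symm)
    simpa using h3

lemma psi_append (I J : List ℕ) : psi (I ++ J) = psi I * psi J := by
  simp [psi]

lemma G_homog {w : List ℕ} (hw : ∀ i ∈ w, 0 < i) (s : ℝ) :
    G 0 w s = s ^ w.sum * G 0 w 1 := by
  have := G_scale w hw s 1
  rwa [mul_one] at this

lemma S_eq : ∀ n, S n = ∑ I ∈ comps n, G 0 I.reverse 1 • psi I := by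
  intro n
  induction n using Nat.strong_induction_on with
  | _ n ih =>
    match n with
    | 0 => rw [S, comps]; simp [G_nil, psi]
    | n + 1 =>
      rw [S, sum_comps_succ, Finset.smul_sum]
      refine Finset.sum_congr rfl fun k hk => ?_
      rw [ih (n - k) (by omega), Finset.sum_mul, Finset.smul_sum]
      refine Finset.sum_congr rfl fun J hJ => ?_
      obtain ⟨hpos, hsum⟩ := (mem_comps _ J).mp hJ
      have hposr : ∀ i ∈ J.reverse, 0 < i := by simpa using hpos
      have hk' : k ≤ n := by simpa using Nat.lt_succ_iff.mp (Finset.mem_range.mp hk)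
      have hrev : (J ++ [k + 1]).reverse = (k + 1) :: J.reverse := by simp
      have hG : G 0 ((k + 1) :: J.reverse) 1 = ((n : ℝ) + 1)⁻¹ * G 0 J.reverse 1 := by
        rw [G_cons]
        have hfun : (fun s : ℝ => s ^ (k + 1 - 1) * G 0 J.reverse s)
            = fun s : ℝ => s ^ n * G 0 J.reverse 1 := by
          funext s
          rw [G_homog hposr s, ← mul_assoc, ← pow_add]
          congr 2
          rw [List.sum_reverse, hsum]
          omega
        rw [hfun, intervalIntegral.integral_mul_const, integral_pow]
        ring
      rw [hrev, hG, psi_append, smul_mul_assoc, smul_smul]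
      congr 2
      simp [psi]

lemma chen_split (q : ℝ) (I : List ℕ) :
    G 0 I.reverse 1 = ∑ j ∈ Finset.range (I.length + 1),
      G 0 (I.take j).reverse q * G q (I.drop j).reverse 1 := by
  have h := chen 0 q I.reverse 1
  rw [List.length_reverse] at h
  rw [h, ← Finset.sum_range_reflect]
  refine Finset.sum_congr rfl fun j hj => ?_
  have hj' : j ≤ I.length := Nat.lt_succ_iff.mp (Finset.mem_range.mp hj)
  have hidx : I.length + 1 - 1 - j = I.length - j := by omega
  rw [hidx]
  have hsplit : I.reverse = (I.drop j).reverse ++ (I.take j).reverse := by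
    rw [← List.reverse_append, List.take_append_drop]
  have hlen1 : (I.drop j).reverse.length = I.length - j := by simp
  have htake : I.reverse.take (I.length - j) = (I.drop j).reverse := by
    rw [hsplit, ← hlen1, List.take_left]
  have hdrop : I.reverse.drop (I.length - j) = (I.take j).reverse := by
    rw [hsplit, ← hlen1, List.drop_left]
  rw [htake, hdrop]
  ring

lemma claim (q : ℝ) (n : ℕ) :
    S n = ∑ k ∈ Finset.range (n + 1), q ^ k • (S k * ∑ I ∈ comps (n - k), g q I • psi I) := by
  have hR : ∀ k ∈ Finset.range (n + 1),
      q ^ k • (S k * ∑ I ∈ comps (n - k), g q I • psi I)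
      = ∑ I1 ∈ comps k, ∑ I2 ∈ comps (n - k),
          (G 0 I1.reverse q * G q I2.reverse 1) • (psi I1 * psi I2) := by
    intro k hk
    rw [S_eq k, Finset.sum_mul_sum, Finset.smul_sum]
    refine Finset.sum_congr rfl fun I1 h1 => ?_
    rw [Finset.smul_sum]
    refine Finset.sum_congr rfl fun I2 _ => ?_
    obtain ⟨hp1, hs1⟩ := (mem_comps _ I1).mp h1
    have hq : G 0 I1.reverse q = q ^ k * G 0 I1.reverse 1 := by
      rw [G_homog (by simpa using hp1) q, List.sum_reverse, hs1]
    rw [hq, smul_mul_smul_comm, smul_smul, g]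
    congr 1
    ring
  rw [S_eq n, Finset.sum_congr rfl hR]
  have hL : ∑ I ∈ comps n, G 0 I.reverse 1 • psi I
      = ∑ I ∈ comps n, ∑ j ∈ Finset.range (I.length + 1),
          (G 0 (I.take j).reverse q * G q (I.drop j).reverse 1)
            • (psi (I.take j) * psi (I.drop j)) := by
    refine Finset.sum_congr rfl fun I _ => ?_
    rw [chen_split q I, Finset.sum_smul]
    refine Finset.sum_congr rfl fun j _ => ?_
    rw [← psi_append, List.take_append_drop]
  rw [hL]
  rw [Finset.sum_sigma' (comps n) (fun I => Finset.range (I.length + 1))]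
  have hpack : ∀ k ∈ Finset.range (n + 1),
      (∑ I1 ∈ comps k, ∑ I2 ∈ comps (n - k),
        (G 0 I1.reverse q * G q I2.reverse 1) • (psi I1 * psi I2))
      = ∑ p ∈ comps k ×ˢ comps (n - k),
        (G 0 p.1.reverse q * G q p.2.reverse 1) • (psi p.1 * psi p.2) := by
    intro k _
    rw [Finset.sum_product]
  rw [Finset.sum_congr rfl hpack,
    Finset.sum_sigma' (Finset.range (n + 1)) (fun k => comps k ×ˢ comps (n - k))]
  refine Finset.sum_nbij'
    (fun p => ⟨(p.1.take p.2).sum, (p.1.take p.2, p.1.drop p.2)⟩)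
    (fun p => ⟨p.2.1 ++ p.2.2, p.2.1.length⟩) ?_ ?_ ?_ ?_ ?_
  · rintro ⟨I, j⟩ hp
    rw [Finset.mem_sigma] at hp
    obtain ⟨hI, hj⟩ := hp
    obtain ⟨hpos, hsum⟩ := (mem_comps _ I).mp hI
    have hss : (I.take j).sum + (I.drop j).sum = n := by
      rw [← List.sum_append, List.take_append_drop, hsum]
    rw [Finset.mem_sigma, Finset.mem_product]
    dsimp only
    refine ⟨Finset.mem_range.mpr (by omega), ?_, ?_⟩
    · exact (mem_comps _ _).mpr ⟨fun i hi => hpos i (List.take_subset j I hi), rfl⟩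
    · exact (mem_comps _ _).mpr ⟨fun i hi => hpos i (List.drop_subset j I hi), by omega⟩
  · rintro ⟨k, I1, I2⟩ hp
    rw [Finset.mem_sigma, Finset.mem_product] at hp
    dsimp only at hp
    obtain ⟨hk, h1, h2⟩ := hp
    obtain ⟨hp1, hs1⟩ := (mem_comps _ I1).mp h1
    obtain ⟨hp2, hs2⟩ := (mem_comps _ I2).mp h2
    have hk' : k ≤ n := Nat.lt_succ_iff.mp (Finset.mem_range.mp hk)
    rw [Finset.mem_sigma]
    dsimp only
    constructor
    · refine (mem_comps _ _).mpr ⟨?_, ?_⟩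
      · intro i hi
        rcases List.mem_append.mp hi with h | h
        exacts [hp1 i h, hp2 i h]
      · rw [List.sum_append]; omega
    · rw [Finset.mem_range, List.length_append]; omega
  · rintro ⟨I, j⟩ hp
    rw [Finset.mem_sigma] at hp
    have hj : j ≤ I.length := Nat.lt_succ_iff.mp (Finset.mem_range.mp hp.2)
    have h2 : (I.take j).length = j := by rw [List.length_take]; omega
    dsimp only
    rw [h2, List.take_append_drop]
  · rintro ⟨k, I1, I2⟩ hp
    rw [Finset.mem_sigma, Finset.mem_product] at hp
    obtain ⟨hk, h1, h2⟩ := hp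
    have hs1 := ((mem_comps _ I1).mp h1).2
    dsimp only
    rw [List.take_left, List.drop_left, hs1]
  · rintro ⟨I, j⟩ _
    rfl

lemma T_eq (q : ℝ) : ∀ n, T q n = ∑ I ∈ comps n, g q I • psi I := by
  intro n
  induction n using Nat.strong_induction_on with
  | _ n ih =>
    match n with
    | 0 => rw [T, comps]; simp [g, G_nil, psi]
    | n + 1 =>
      rw [T]
      have hS0 : S 0 = 1 := by rw [S]
      have hc := claim q (n + 1)
      rw [Finset.sum_range_succ'] at hc
      simp only [pow_zero, one_smul, Nat.sub_zero, hS0, one_mul, Nat.succ_sub_succ] at hc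
      rw [hc]
      rw [Finset.sum_congr rfl (fun k hk => by
        rw [ih (n - k) (by omega)] :
        ∀ k ∈ Finset.range (n+1), q ^ (k + 1) • (S (k + 1) * T q (n - k))
          = q ^ (k + 1) • (S (k + 1) * ∑ I ∈ comps (n - k), g q I • psi I))]
      exact add_sub_cancel_left _ _

/-- the coefficient of `Ψ^I` in `S_n((1−q)A)` is the composition
polynomial `g_I(q)`: `T_n(q) = Σ_{I ⊨ n} g_I(q) Ψ^I`. -/
theorem one_sub_q_transform_coefficients (n : ℕ) (q : ℝ) :
    T q n = ∑ᶠ I ∈ {I : List ℕ | (∀ i ∈ I, 0 < i) ∧ I.sum = n}, g q I • psi I := by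
  have hset : {I : List ℕ | (∀ i ∈ I, 0 < i) ∧ I.sum = n} = ↑(comps n) := by
    ext I; simp [mem_comps]
  rw [hset, finsum_mem_coe_finset, T_eq]
end
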